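/- arXiv:2405.05222 — 2 statements merged into one kernel-verified Lean document; each statement's English description precedes it below -/
import Mathlib

section
/- Let (D,F = (f₁,f₂)) be a valid tight pair that is not a hard pair and such that the underlying graph UG(D) is a cycle. Then D is F-dicolourable. -/
open scoped Classical

/-- A finite digraph with vertex set a `Finset ℕ` and no loops.
Both arcs `(u,v)` and `(v,u)` may be present (a digon). -/
structure Digraph' where
  verts : Finset ℕ
  arcs : Finset (ℕ × ℕ)
  mem_fst : ∀ a ∈ arcs, a.1 ∈ verts
  mem_snd : ∀ a ∈ arcs, a.2 ∈ verts
  no_loops : ∀ a ∈ arcs, a.1 ≠ a.2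

namespace Digraph'

/-- In-degree of `v`. -/
def inDeg (D : Digraph') (v : ℕ) : ℕ := (D.arcs.filter fun a => a.2 = v).card

/-- Out-degree of `v`. -/
def outDeg (D : Digraph') (v : ℕ) : ℕ := (D.arcs.filter fun a => a.1 = v).card

/-- In-neighbourhood of `v`. -/
def inNbrs (D : Digraph') (v : ℕ) : Finset ℕ := (D.arcs.filter fun a => a.2 = v).image Prod.fst

/-- Out-neighbourhood of `v`. -/
def outNbrs (D : Digraph') (v : ℕ) : Finset ℕ := (D.arcs.filter fun a => a.1 = v).image Prod.snd

/-- Neighbourhood of `v` in the underlying graph. -/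
def ugNbrs (D : Digraph') (v : ℕ) : Finset ℕ := D.inNbrs v ∪ D.outNbrs v

/-- `H` is a subdigraph of `D`. -/
def IsSubdigraph (H D : Digraph') : Prop := H.verts ⊆ D.verts ∧ H.arcs ⊆ D.arcs

/-- The subdigraph of `D` induced by the vertex set `X`. -/
def induce (D : Digraph') (X : Finset ℕ) : Digraph' where
  verts := D.verts ∩ X
  arcs := D.arcs.filter fun a => a.1 ∈ X ∧ a.2 ∈ X
  mem_fst := fun a ha => by
    simp only [Finset.mem_filter] at ha
    exact Finset.mem_inter.mpr ⟨D.mem_fst a ha.1, ha.2.1⟩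
  mem_snd := fun a ha => by
    simp only [Finset.mem_filter] at ha
    exact Finset.mem_inter.mpr ⟨D.mem_snd a ha.1, ha.2.2⟩
  no_loops := fun a ha => by
    simp only [Finset.mem_filter] at ha
    exact D.no_loops a ha.1

/-- `D − X`, the digraph obtained from `D` by deleting the vertices of `X`. -/
def del (D : Digraph') (X : Finset ℕ) : Digraph' := D.induce (D.verts \ X)

/-- Adjacency in the underlying graph of `D`. -/
def ugAdj (D : Digraph') (u v : ℕ) : Prop :=
  u ∈ D.verts ∧ v ∈ D.verts ∧ ((u, v) ∈ D.arcs ∨ (v, u) ∈ D.arcs)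

/-- `D` is connected, i.e. its underlying graph is connected. -/
def Connected (D : Digraph') : Prop :=
  D.verts.Nonempty ∧ ∀ u ∈ D.verts, ∀ v ∈ D.verts, Relation.ReflTransGen D.ugAdj u v

/-- `D` is biconnected: it has at least two vertices, is connected, and stays
connected after the deletion of any vertex. -/
def Biconnected (D : Digraph') : Prop :=
  2 ≤ D.verts.card ∧ D.Connected ∧ ∀ x ∈ D.verts, (D.del {x}).Connected

/-- Every arc of `D` lies in a digon. -/
def Bidirected (D : Digraph') : Prop := ∀ a ∈ D.arcs, (a.2, a.1) ∈ D.arcs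

/-- The underlying graph of `D` is a cycle. -/
def IsCycleUG (D : Digraph') : Prop :=
  D.Connected ∧ ∀ v ∈ D.verts, (D.ugNbrs v).card = 2

/-- `D` is a bidirected odd cycle. -/
def BidirectedOddCycle (D : Digraph') : Prop :=
  D.Bidirected ∧ D.IsCycleUG ∧ Odd D.verts.card

/-- `D` is a bidirected complete graph. -/
def BidirectedComplete (D : Digraph') : Prop :=
  ∀ u ∈ D.verts, ∀ v ∈ D.verts, u ≠ v → (u, v) ∈ D.arcs

/-- `D` is strictly-`f`-bidegenerate: every nonempty subdigraph `H` of `D` contains a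
vertex `v` with `d⁻_H(v) < f⁻(v)` or `d⁺_H(v) < f⁺(v)`. -/
def StrictlyBidegenerate (D : Digraph') (f : ℕ → ℕ × ℕ) : Prop :=
  ∀ H : Digraph', H.IsSubdigraph D → H.verts.Nonempty →
    ∃ v ∈ H.verts, H.inDeg v < (f v).1 ∨ H.outDeg v < (f v).2

/-- `α` is an `F`-dicolouring of `D`: for each colour `i`, the subdigraph induced by the
vertices coloured `i` is strictly-`Fᵢ`-bidegenerate. -/
def IsDicolouring (D : Digraph') (s : ℕ) (F : Fin s → ℕ → ℕ × ℕ) (α : ℕ → Fin s) : Prop :=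
  ∀ i : Fin s, (D.induce (D.verts.filter fun v => α v = i)).StrictlyBidegenerate (F i)

/-- `D` is `F`-dicolourable. -/
def Dicolourable (D : Digraph') (s : ℕ) (F : Fin s → ℕ → ℕ × ℕ) : Prop :=
  ∃ α : ℕ → Fin s, D.IsDicolouring s F α

/-- `(D,F)` is a valid pair: `D` is connected and the colour budget dominates the
in- and out-degrees at every vertex. -/
def ValidPair (D : Digraph') (s : ℕ) (F : Fin s → ℕ → ℕ × ℕ) : Prop :=
  D.Connected ∧ ∀ v ∈ D.verts,
    D.inDeg v ≤ ∑ i, (F i v).1 ∧ D.outDeg v ≤ ∑ i, (F i v).2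

/-- `(D,F)` is tight: both budget inequalities are equalities at every vertex. -/
def Tight (D : Digraph') (s : ℕ) (F : Fin s → ℕ → ℕ × ℕ) : Prop :=
  ∀ v ∈ D.verts, ∑ i, (F i v).1 = D.inDeg v ∧ ∑ i, (F i v).2 = D.outDeg v

/-- Hard pairs, defined inductively: monochromatic, bicycle, complete, and join hard pairs. -/
inductive IsHardPair : (s : ℕ) → Digraph' → (Fin s → ℕ → ℕ × ℕ) → Prop
  | mono {s : ℕ} {D : Digraph'} {F : Fin s → ℕ → ℕ × ℕ} (i : Fin s)
      (hbi : D.Biconnected)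
      (hi : ∀ v ∈ D.verts, F i v = (D.inDeg v, D.outDeg v))
      (hk : ∀ k : Fin s, k ≠ i → ∀ v ∈ D.verts, F k v = (0, 0)) :
      IsHardPair s D F
  | bicycle {s : ℕ} {D : Digraph'} {F : Fin s → ℕ → ℕ × ℕ} (i j : Fin s) (hij : i ≠ j)
      (hD : D.BidirectedOddCycle)
      (hi : ∀ v ∈ D.verts, F i v = (1, 1))
      (hj : ∀ v ∈ D.verts, F j v = (1, 1))
      (hk : ∀ k : Fin s, k ≠ i → k ≠ j → ∀ v ∈ D.verts, F k v = (0, 0)) :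
      IsHardPair s D F
  | complete {s : ℕ} {D : Digraph'} {F : Fin s → ℕ → ℕ × ℕ}
      (hD : D.BidirectedComplete)
      (hconst : ∀ k : Fin s, ∀ u ∈ D.verts, ∀ v ∈ D.verts, F k u = F k v)
      (hsym : ∀ k : Fin s, ∀ v ∈ D.verts, (F k v).1 = (F k v).2)
      (hsum : ∀ v ∈ D.verts, ∑ k, (F k v).2 = D.verts.card - 1) :
      IsHardPair s D F
  | join {s : ℕ} {D : Digraph'} {F : Fin s → ℕ → ℕ × ℕ}
      (D₁ D₂ : Digraph') (F₁ F₂ : Fin s → ℕ → ℕ × ℕ) (x : ℕ)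
      (h₁ : IsHardPair s D₁ F₁) (h₂ : IsHardPair s D₂ F₂)
      (hx : D₁.verts ∩ D₂.verts = {x})
      (hV : D.verts = D₁.verts ∪ D₂.verts)
      (hA : D.arcs = D₁.arcs ∪ D₂.arcs)
      (hF₁ : ∀ k : Fin s, ∀ v ∈ D₁.verts, v ≠ x → F k v = F₁ k v)
      (hF₂ : ∀ k : Fin s, ∀ v ∈ D₂.verts, v ≠ x → F k v = F₂ k v)
      (hFx : ∀ k : Fin s, F k x = ((F₁ k x).1 + (F₂ k x).1, (F₁ k x).2 + (F₂ k x).2)) :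
      IsHardPair s D F

/-- The sequence of functions of the pair reduced from `(D,F)` by a colouring `α` of
`X ⊆ V(D)`: the budget of colour `i` at `u` decreases by the number of in- and out-neighbours
of `u` inside `X` coloured `i` (truncated at `0`). -/
def reduceF (D : Digraph') {s : ℕ} (F : Fin s → ℕ → ℕ × ℕ) (X : Finset ℕ) (α : ℕ → Fin s) :
    Fin s → ℕ → ℕ × ℕ :=
  fun i u =>
    ((F i u).1 - ((D.inNbrs u ∩ X).filter fun w => α w = i).card,
     (F i u).2 - ((D.outNbrs u ∩ X).filter fun w => α w = i).card)

/-- `B` is a block of `D`: a maximal biconnected subdigraph. -/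
def IsBlock (B D : Digraph') : Prop :=
  B.IsSubdigraph D ∧ B.Biconnected ∧
    ∀ B' : Digraph', B'.IsSubdigraph D → B'.Biconnected → B.IsSubdigraph B' → B' = B

/-- `x` is a cut-vertex of `D`: `D − x` is disconnected. -/
def CutVertex (D : Digraph') (x : ℕ) : Prop :=
  x ∈ D.verts ∧ (D.del {x}).verts.Nonempty ∧ ¬ (D.del {x}).Connected

/-- `B` is an end-block of `D` whose unique cut-vertex (of `D`) in `B` is `x`. -/
def IsEndBlockAt (B D : Digraph') (x : ℕ) : Prop :=
  IsBlock B D ∧ x ∈ B.verts ∧ D.CutVertex x ∧ ∀ y ∈ B.verts, D.CutVertex y → y = x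

/-- `B` is a monochromatic hard end-block with cut-vertex `x`, for colour `c`. -/
def MonoHardEndBlock {s : ℕ} (F : Fin s → ℕ → ℕ × ℕ) (B : Digraph') (x : ℕ) (c : Fin s) : Prop :=
  B.inDeg x ≤ (F c x).1 ∧ B.outDeg x ≤ (F c x).2 ∧
    ∀ v ∈ B.verts, v ≠ x →
      F c v = (B.inDeg v, B.outDeg v) ∧ ∀ k : Fin s, k ≠ c → F k v = (0, 0)

/-- `B` is a bicycle hard end-block with cut-vertex `x`. -/
def BicycleHardEndBlock {s : ℕ} (F : Fin s → ℕ → ℕ × ℕ) (B : Digraph') (x : ℕ) : Prop :=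
  B.BidirectedOddCycle ∧
    ∃ i j : Fin s, i ≠ j ∧
      1 ≤ (F i x).1 ∧ 1 ≤ (F i x).2 ∧ 1 ≤ (F j x).1 ∧ 1 ≤ (F j x).2 ∧
      ∀ v ∈ B.verts, v ≠ x →
        F i v = (1, 1) ∧ F j v = (1, 1) ∧ ∀ k : Fin s, k ≠ i → k ≠ j → F k v = (0, 0)

/-- `B` is a complete hard end-block with cut-vertex `x`. -/
def CompleteHardEndBlock {s : ℕ} (F : Fin s → ℕ → ℕ × ℕ) (B : Digraph') (x : ℕ) : Prop :=
  B.BidirectedComplete ∧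
    (∀ k : Fin s, ∀ u ∈ B.verts, u ≠ x → ∀ v ∈ B.verts, v ≠ x → F k u = F k v) ∧
    (∀ k : Fin s, ∀ v ∈ B.verts, v ≠ x → (F k v).1 = (F k v).2) ∧
    (∀ k : Fin s, ∀ u ∈ B.verts, u ≠ x → (F k u).1 ≤ (F k x).1 ∧ (F k u).2 ≤ (F k x).2)

/-- `B` is a hard end-block with cut-vertex `x`. -/
def HardEndBlock {s : ℕ} (F : Fin s → ℕ → ℕ × ℕ) (B : Digraph') (x : ℕ) : Prop :=
  (∃ c : Fin s, MonoHardEndBlock F B x c) ∨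
    BicycleHardEndBlock F B x ∨ CompleteHardEndBlock F B x

/-- `(D',F')` is the contraction of `(D,F)` with respect to the hard end-block `B` with
cut-vertex `x`, where `u` is a vertex of `B` other than `x`. -/
def IsContraction (D : Digraph') {s : ℕ} (F : Fin s → ℕ → ℕ × ℕ) (B : Digraph') (x u : ℕ)
    (D' : Digraph') (F' : Fin s → ℕ → ℕ × ℕ) : Prop :=
  D' = D.del (B.verts \ {x}) ∧
  (∀ k : Fin s, ∀ v ∈ D'.verts, v ≠ x → F' k v = F k v) ∧
  ((∃ c : Fin s, MonoHardEndBlock F B x c ∧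
      F' c x = ((F c x).1 - B.inDeg x, (F c x).2 - B.outDeg x) ∧
      ∀ k : Fin s, k ≠ c → F' k x = F k x) ∨
   ((¬ ∃ c : Fin s, MonoHardEndBlock F B x c) ∧
      ∀ k : Fin s, F' k x = ((F k x).1 - (F k u).1, (F k x).2 - (F k u).2)))

/-- Property (E): all the functions exceed `1` in the relevant coordinate at every vertex
having an in-(resp. out-)neighbour. -/
def PropE (D : Digraph') {s : ℕ} (F : Fin s → ℕ → ℕ × ℕ) : Prop :=
  ∀ x ∈ D.verts, ∀ c : Fin s,
    (0 < D.inDeg x → 1 ≤ (F c x).1) ∧ (0 < D.outDeg x → 1 ≤ (F c x).2)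

/-- `C` is a directed cycle: connected, and every vertex has in- and out-degree one. -/
def IsDirectedCycle (C : Digraph') : Prop :=
  C.Connected ∧ ∀ v ∈ C.verts, C.inDeg v = 1 ∧ C.outDeg v = 1

/-- `D` is acyclic: it contains no directed cycle. -/
def AcyclicD (D : Digraph') : Prop :=
  ¬ ∃ C : Digraph', C.IsSubdigraph D ∧ C.IsDirectedCycle

/-- `α` is a `k`-dicolouring of `D`: every colour class induces an acyclic subdigraph. -/
def IsKDicolouring (D : Digraph') (k : ℕ) (α : ℕ → Fin k) : Prop :=
  ∀ i : Fin k, AcyclicD (D.induce (D.verts.filter fun v => α v = i))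

/-- The dichromatic number of `D`. -/
noncomputable def dichromatic (D : Digraph') : ℕ :=
  sInf {k : ℕ | ∃ α : ℕ → Fin k, D.IsKDicolouring k α}

end Digraph'

open Digraph'




namespace Digraph'

variable {D : Digraph'}

lemma mem_inNbrs {w v : ℕ} : w ∈ D.inNbrs v ↔ (w, v) ∈ D.arcs := by
  constructor
  · intro h
    simp only [inNbrs, Finset.mem_image, Finset.mem_filter] at h
    obtain ⟨a, ⟨ha, h2⟩, h1⟩ := h
    have : a = (w, v) := by cases a; simp_all
    rwa [this] at ha
  · intro h
    simp only [inNbrs, Finset.mem_image, Finset.mem_filter]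
    exact ⟨(w, v), ⟨h, rfl⟩, rfl⟩

lemma mem_outNbrs {w v : ℕ} : w ∈ D.outNbrs v ↔ (v, w) ∈ D.arcs := by
  constructor
  · intro h
    simp only [outNbrs, Finset.mem_image, Finset.mem_filter] at h
    obtain ⟨a, ⟨ha, h1⟩, h2⟩ := h
    have : a = (v, w) := by cases a; simp_all
    rwa [this] at ha
  · intro h
    simp only [outNbrs, Finset.mem_image, Finset.mem_filter]
    exact ⟨(v, w), ⟨h, rfl⟩, rfl⟩

lemma mem_ugNbrs {w v : ℕ} :
    w ∈ D.ugNbrs v ↔ (w, v) ∈ D.arcs ∨ (v, w) ∈ D.arcs := by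
  simp [ugNbrs, mem_inNbrs, mem_outNbrs]

lemma ugNbrs_symm {w v : ℕ} : w ∈ D.ugNbrs v ↔ v ∈ D.ugNbrs w := by
  rw [mem_ugNbrs, mem_ugNbrs, or_comm]

lemma not_self_mem_ugNbrs {v : ℕ} : v ∉ D.ugNbrs v := by
  rw [mem_ugNbrs]
  rintro (h | h) <;> exact D.no_loops _ h rfl

lemma mem_verts_of_mem_ugNbrs {w v : ℕ} (h : w ∈ D.ugNbrs v) : w ∈ D.verts := by
  rw [mem_ugNbrs] at h
  rcases h with h | h
  · exact D.mem_fst _ h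
  · exact D.mem_snd _ h

lemma inDeg_eq_card_inNbrs (v : ℕ) : D.inDeg v = (D.inNbrs v).card := by
  rw [inDeg, inNbrs]
  rw [Finset.card_image_of_injOn]
  intro a ha b hb hab
  simp only [Finset.mem_coe, Finset.mem_filter] at ha hb
  cases a; cases b; simp_all

lemma outDeg_eq_card_outNbrs (v : ℕ) : D.outDeg v = (D.outNbrs v).card := by
  rw [outDeg, outNbrs]
  rw [Finset.card_image_of_injOn]
  intro a ha b hb hab
  simp only [Finset.mem_coe, Finset.mem_filter] at ha hb
  cases a; cases b; simp_all

lemma inDeg_induce_le (Y : Finset ℕ) (v : ℕ) :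
    (D.induce Y).inDeg v ≤ (D.inNbrs v ∩ Y).card := by
  rw [inDeg]
  apply Finset.card_le_card_of_injOn (fun a => a.1)
  · intro a ha
    simp only [induce, Finset.mem_coe, Finset.mem_filter] at ha
    simp only [Finset.mem_coe, Finset.mem_inter, mem_inNbrs]
    obtain ⟨⟨ha1, hy1, hy2⟩, h2⟩ := ha
    constructor
    · have : a = (a.1, v) := by cases a; simp_all
      rwa [this] at ha1
    · exact hy1
  · intro a ha b hb hab
    simp only [Finset.mem_coe, Finset.mem_filter] at ha hb
    cases a; cases b; simp_all

lemma outDeg_induce_le (Y : Finset ℕ) (v : ℕ) :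
    (D.induce Y).outDeg v ≤ (D.outNbrs v ∩ Y).card := by
  rw [outDeg]
  apply Finset.card_le_card_of_injOn (fun a => a.2)
  · intro a ha
    simp only [induce, Finset.mem_coe, Finset.mem_filter] at ha
    simp only [Finset.mem_coe, Finset.mem_inter, mem_outNbrs]
    obtain ⟨⟨ha1, hy1, hy2⟩, h2⟩ := ha
    constructor
    · have : a = (v, a.2) := by cases a; simp_all
      rwa [this] at ha1
    · exact hy2
  · intro a ha b hb hab
    simp only [Finset.mem_coe, Finset.mem_filter] at ha hb
    cases a; cases b; simp_all

/-- strict helper : if an in-neighbour is missing from `Y`, induced in-degree is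
strictly less than the full in-degree. -/
lemma card_inter_lt_of_not_mem {s Y : Finset ℕ} {w : ℕ} (hw : w ∈ s) (hwY : w ∉ Y) :
    (s ∩ Y).card < s.card := by
  apply Finset.card_lt_card
  constructor
  · exact Finset.inter_subset_left
  · intro hsub
    exact hwY (Finset.mem_inter.mp (hsub hw)).2

lemma inDeg_mono {H H' : Digraph'} (h : H.arcs ⊆ H'.arcs) (v : ℕ) :
    H.inDeg v ≤ H'.inDeg v := by
  exact Finset.card_le_card (Finset.filter_subset_filter _ h)

lemma outDeg_mono {H H' : Digraph'} (h : H.arcs ⊆ H'.arcs) (v : ℕ) :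
    H.outDeg v ≤ H'.outDeg v := by
  exact Finset.card_le_card (Finset.filter_subset_filter _ h)

/-- The elimination lemma. -/
lemma elim (D : Digraph') (X : Finset ℕ) (f : ℕ → ℕ × ℕ) (r : ℕ → ℕ)
    (h : ∀ v ∈ D.verts, v ∈ X →
      ((D.induce (X.filter (fun w => r v ≤ r w))).inDeg v < (f v).1 ∨
       (D.induce (X.filter (fun w => r v ≤ r w))).outDeg v < (f v).2)) :
    (D.induce X).StrictlyBidegenerate f := by
  intro H hsub hne
  obtain ⟨v, hv, hmin⟩ := Finset.exists_min_image H.verts r hne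
  have hvX : v ∈ (D.induce X).verts := hsub.1 hv
  simp only [induce, Finset.mem_inter] at hvX
  have harcs : H.arcs ⊆ (D.induce (X.filter (fun w => r v ≤ r w))).arcs := by
    intro a ha
    have ha' := hsub.2 ha
    simp only [induce, Finset.mem_filter] at ha' ⊢
    obtain ⟨haD, h1, h2⟩ := ha'
    refine ⟨haD, ⟨h1, hmin _ (H.mem_fst a ha)⟩, ⟨h2, hmin _ (H.mem_snd a ha)⟩⟩
  refine ⟨v, hv, ?_⟩
  rcases h v hvX.1 hvX.2 with h' | h'
  · exact Or.inl (lt_of_le_of_lt (inDeg_mono harcs v) h')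
  · exact Or.inr (lt_of_le_of_lt (outDeg_mono harcs v) h')

lemma card_subset_pair {s : Finset ℕ} {a b : ℕ} (hab : a ≠ b) (h : s ⊆ {a, b}) :
    s.card = (if a ∈ s then 1 else 0) + (if b ∈ s then 1 else 0) := by
  by_cases ha : a ∈ s <;> by_cases hb : b ∈ s
  · have : s = {a, b} := Finset.Subset.antisymm h (by
      intro x hx
      simp only [Finset.mem_insert, Finset.mem_singleton] at hx
      rcases hx with rfl | rfl <;> assumption)
    simp [this, ha, hb, Finset.card_insert_of_notMem, hab]
  · have : s = {a} := Finset.Subset.antisymm (by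
      intro x hx
      have := h hx
      simp only [Finset.mem_insert, Finset.mem_singleton] at this
      rcases this with rfl | rfl
      · exact Finset.mem_singleton_self _
      · exact absurd hx hb) (Finset.singleton_subset_iff.mpr ha)
    simp [this, ha, hb, hab, Ne.symm hab]
  · have : s = {b} := Finset.Subset.antisymm (by
      intro x hx
      have := h hx
      simp only [Finset.mem_insert, Finset.mem_singleton] at this
      rcases this with rfl | rfl
      · exact absurd hx ha
      · exact Finset.mem_singleton_self _) (Finset.singleton_subset_iff.mpr hb)
    simp [this, ha, hb, hab, Ne.symm hab]
  · have : s = ∅ := Finset.eq_empty_of_forall_notMem (by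
      intro x hx
      have := h hx
      simp only [Finset.mem_insert, Finset.mem_singleton] at this
      rcases this with rfl | rfl
      · exact ha hx
      · exact hb hx)
    simp [this, ha, hb, hab, Ne.symm hab]

end Digraph'




namespace Digraph'

/-- A cyclic enumeration of the vertices of `D`. -/
structure CycEnum (D : Digraph') (n : ℕ) (g : ℕ → ℕ) : Prop where
  n3 : 3 ≤ n
  mem : ∀ k, g k ∈ D.verts
  surj : ∀ v ∈ D.verts, ∃ p, p < n ∧ g p = v
  inj : ∀ k, k < n → ∀ l, l < n → g k = g l → k = l
  per : ∀ k, g (k + n) = g k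
  nbrs : ∀ k, D.ugNbrs (g (k+1)) = {g k, g (k+2)}

lemma cycle_structure (D : Digraph') (hcyc : D.IsCycleUG) :
    ∃ n g, CycEnum D n g := by
  obtain ⟨⟨v0, hv0⟩, hconn⟩ := hcyc.1
  have hcard : ∀ c ∈ D.verts, (D.ugNbrs c).card = 2 := hcyc.2
  have hv1ex : (D.ugNbrs v0).Nonempty := by
    rw [← Finset.card_pos, hcard v0 hv0]; norm_num
  obtain ⟨v1, hv1⟩ := hv1ex
  set next : ℕ → ℕ → ℕ := fun p c =>
    if h : ((D.ugNbrs c).erase p).Nonempty then h.choose else 0 with hnext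
  have next_spec : ∀ p c, c ∈ D.verts → p ∈ D.ugNbrs c →
      next p c ∈ D.ugNbrs c ∧ next p c ≠ p := by
    intro p c hc hp
    have h1 : 0 < ((D.ugNbrs c).erase p).card := by
      rw [Finset.card_erase_of_mem hp, hcard c hc]
      norm_num
    have hne : ((D.ugNbrs c).erase p).Nonempty := Finset.card_pos.mp h1
    have hval : next p c = hne.choose := by rw [hnext]; exact dif_pos hne
    have hmem := hne.choose_spec
    rw [hval]
    exact ⟨Finset.mem_of_mem_erase hmem, Finset.ne_of_mem_erase hmem⟩
  set h : ℕ → ℕ × ℕ :=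
    fun k => Nat.rec (v0, v1) (fun _ pc => (pc.2, next pc.1 pc.2)) k with hh
  set g : ℕ → ℕ := fun k => (h k).1 with hgdef
  have hsucc : ∀ k, h (k+1) = ((h k).2, next (h k).1 (h k).2) := fun k => rfl
  have hg1 : ∀ k, g (k+1) = (h k).2 := fun k => by simp [hgdef, hsucc k]
  have hg2 : ∀ k, g (k+2) = next (g k) (g (k+1)) := by
    intro k
    have : g (k+2) = (h (k+1)).2 := hg1 (k+1)
    rw [this, hsucc k, hg1 k, hgdef]
  have hg0 : g 0 = v0 := rfl
  have hg10 : g 1 = v1 := by rw [show (1:ℕ) = 0 + 1 from rfl, hg1 0]; rfl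
  have inv : ∀ k, g k ∈ D.verts ∧ g (k+1) ∈ D.ugNbrs (g k) := by
    intro k
    induction k with
    | zero => exact ⟨(hg0 ▸ hv0), by simpa [hg0, hg10] using hv1⟩
    | succ k ih =>
      have hk1v : g (k+1) ∈ D.verts := mem_verts_of_mem_ugNbrs ih.2
      have hprev : g k ∈ D.ugNbrs (g (k+1)) := ugNbrs_symm.mp ih.2
      have := next_spec (g k) (g (k+1)) hk1v hprev
      exact ⟨hk1v, by rw [hg2 k]; exact this.1⟩
  have gV : ∀ k, g k ∈ D.verts := fun k => (inv k).1
  have NE1 : ∀ k, g (k+1) ≠ g k := by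
    intro k e
    have := (inv k).2
    rw [e] at this
    exact not_self_mem_ugNbrs this
  have NE2 : ∀ k, g (k+2) ≠ g k := by
    intro k
    rw [hg2 k]
    exact (next_spec (g k) (g (k+1)) (mem_verts_of_mem_ugNbrs (inv k).2)
      (ugNbrs_symm.mp (inv k).2)).2
  have NBR : ∀ k, D.ugNbrs (g (k+1)) = {g k, g (k+2)} := by
    intro k
    have hsub : ({g k, g (k+2)} : Finset ℕ) ⊆ D.ugNbrs (g (k+1)) := by
      rw [Finset.insert_subset_iff, Finset.singleton_subset_iff]
      refine ⟨ugNbrs_symm.mp (inv k).2, (inv (k+1)).2⟩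
    have hc2 : ({g k, g (k+2)} : Finset ℕ).card = 2 := by
      rw [Finset.card_insert_of_notMem (by simp [Ne.symm (NE2 k)]), Finset.card_singleton]
    exact (Finset.eq_of_subset_of_card_le hsub
      (by rw [hcard _ (mem_verts_of_mem_ugNbrs (inv k).2), hc2])).symm
  set P : ℕ → ℕ × ℕ := fun k => (g k, g (k+1)) with hP
  have Pfst : ∀ a b, P a = P b → g a = g b := fun a b e => congrArg Prod.fst e
  have Psnd : ∀ a b, P a = P b → g (a+1) = g (b+1) := fun a b e => congrArg Prod.snd e
  have Pmk : ∀ a b, g a = g b → g (a+1) = g (b+1) → P a = P b := by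
    intro a b e1 e2; rw [hP]; simp [e1, e2]
  have fwd1 : ∀ a b, P a = P b → P (a+1) = P (b+1) := by
    intro a b e
    refine Pmk (a+1) (b+1) (Psnd a b e) ?_
    show g (a+2) = g (b+2)
    rw [hg2 a, hg2 b, Pfst a b e, Psnd a b e]
  have fwdt : ∀ t a b, P a = P b → P (a+t) = P (b+t) := by
    intro t
    induction t with
    | zero => intro a b e; simpa using e
    | succ t ih =>
      intro a b e
      have := fwd1 _ _ (ih a b e)
      rw [show a + (t+1) = a + t + 1 from rfl, show b + (t+1) = b + t + 1 from rfl]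
      exact this
  have bwd1 : ∀ a b, P (a+1) = P (b+1) → P a = P b := by
    intro a b e
    have e1 : g (a+1) = g (b+1) := Pfst (a+1) (b+1) e
    have e2 : g (a+2) = g (b+2) := by
      rw [show a+2 = a+1+1 from by omega, show b+2 = b+1+1 from by omega]
      exact Psnd (a+1) (b+1) e
    have h1 : g a ∈ D.ugNbrs (g (a+1)) := ugNbrs_symm.mp (inv a).2
    rw [e1, NBR b] at h1
    simp only [Finset.mem_insert, Finset.mem_singleton] at h1
    rcases h1 with h1 | h1
    · exact Pmk _ _ h1 e1
    · exfalso
      rw [← e2] at h1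
      exact NE2 a h1.symm
  have bwdshift : ∀ d a, P a = P (a + d) → P 0 = P d := by
    intro d a
    induction a with
    | zero => intro e; simpa using e
    | succ a ih =>
      intro e
      refine ih (bwd1 a (a+d) ?_)
      rw [show a + d + 1 = a + 1 + d from by omega]
      exact e
  have hrep : ∃ m, 0 < m ∧ P m = P 0 := by
    obtain ⟨a, b, hab, hfab⟩ := Finite.exists_ne_map_eq_of_infinite
      (fun k => ((⟨g k, gV k⟩ : {x // x ∈ D.verts}),
        (⟨g (k+1), gV (k+1)⟩ : {x // x ∈ D.verts})))
    simp only [Prod.mk.injEq, Subtype.mk.injEq] at hfab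
    have hPab : P a = P b := Pmk _ _ hfab.1 hfab.2
    rcases Nat.lt_or_ge a b with hlt | hge
    · refine ⟨b - a, by omega, ?_⟩
      have := bwdshift (b - a) a (by rw [show a + (b - a) = b from by omega]; exact hPab)
      exact this.symm
    · have hlt : b < a := by omega
      refine ⟨a - b, by omega, ?_⟩
      have := bwdshift (a - b) b (by rw [show b + (a - b) = a from by omega]; exact hPab.symm)
      exact this.symm
  set n := Nat.find hrep with hn
  obtain ⟨hnpos, hPn⟩ := Nat.find_spec hrep
  rw [← hn] at hnpos hPn
  have hmin : ∀ m, m < n → ¬(0 < m ∧ P m = P 0) := fun m hm => Nat.find_min hrep hm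
  have per : ∀ k, g (k + n) = g k := by
    intro k
    have : P (n + k) = P (0 + k) := fwdt k n 0 hPn
    have := Pfst _ _ this
    rw [show n + k = k + n from by omega, Nat.zero_add] at this
    exact this
  have hn1 : n ≠ 1 := by
    intro e
    rw [e] at hPn
    have h1 : g 1 = g 0 := Pfst 1 0 hPn
    exact NE1 0 (by rw [show (0:ℕ)+1 = 1 from rfl]; exact h1)
  have hn2 : n ≠ 2 := by
    intro e
    rw [e] at hPn
    have h1 : g 2 = g 0 := Pfst 2 0 hPn
    exact NE2 0 (by rw [show (0:ℕ)+2 = 2 from rfl]; exact h1)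
  have n3 : 3 ≤ n := by omega
  have permul : ∀ m k, g (k + m * n) = g k := by
    intro m
    induction m with
    | zero => intro k; simp
    | succ m ih =>
      intro k
      rw [show k + (m+1) * n = (k + m * n) + n from by ring, per, ih]
  have gmod : ∀ k, g k = g (k % n) := by
    intro k
    conv_lhs => rw [show k = k % n + (k / n) * n from by
      rw [Nat.mod_add_div' k n]]
    exact permul (k / n) (k % n)
  have nbrA : ∀ p, D.ugNbrs (g p) = {g (p + n - 1), g (p + 1)} := by
    intro p
    have h1 : p + n - 1 + 1 = p + n := by omega
    have h2 : p + n - 1 + 2 = (p + 1) + n := by omega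
    have := NBR (p + n - 1)
    rw [h1, h2, per (p+1), per p] at this
    exact this
  have key : ∀ a b, a < b → b < n → g a = g b → False := by
    intro a b hab hbn heq
    set d := b - a with hd
    have hd1 : 1 ≤ d := by omega
    have hnbrb : D.ugNbrs (g b) = {g (b - 1), g (b + 1)} := by
      have h1 : b - 1 + 1 = b := by omega
      have h2 : b - 1 + 2 = b + 1 := by omega
      have := NBR (b - 1)
      rw [h1, h2] at this
      exact this
    have hga1 : g (a+1) ∈ D.ugNbrs (g b) := by
      rw [← heq, nbrA a]
      exact Finset.mem_insert_of_mem (Finset.mem_singleton_self _)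
    rw [hnbrb] at hga1
    simp only [Finset.mem_insert, Finset.mem_singleton] at hga1
    rcases hga1 with hr | hf
    · -- reflection case
      by_cases hd2 : d = 1
      · rw [show b - 1 = a from by omega] at hr
        exact NE1 a hr
      have hd2' : 2 ≤ d := by omega
      have R : ∀ t, t ≤ d - 1 → g (a + t) = g (b - t) ∧ g (a + t + 1) = g (b - t - 1) := by
        intro t
        induction t with
        | zero =>
          intro _
          constructor
          · simpa using heq
          · simpa using hr
        | succ t ih =>
          intro ht
          obtain ⟨e1, e2⟩ := ih (by omega)
          have c1 : g (a + (t+1)) = g (b - (t+1)) := by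
            rw [show a + (t+1) = a + t + 1 from by omega, show b - (t+1) = b - t - 1 from by omega]
            exact e2
          refine ⟨c1, ?_⟩
          have hmem : g (a + t + 2) ∈ D.ugNbrs (g (a + t + 1)) := (inv (a + t + 1)).2
          have hnb : D.ugNbrs (g (b - t - 1)) = {g (b - t - 2), g (b - t)} := by
            have h1 : b - t - 2 + 1 = b - t - 1 := by omega
            have h2 : b - t - 2 + 2 = b - t := by omega
            have := NBR (b - t - 2)
            rw [h1, h2] at this
            exact this
          rw [show a + t + 2 = a + t + 1 + 1 from by omega] at hmem
          rw [e2, hnb] at hmem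
          simp only [Finset.mem_insert, Finset.mem_singleton] at hmem
          rcases hmem with hm | hm
          · rw [show a + (t+1) + 1 = a + t + 1 + 1 from by omega,
              show b - (t+1) - 1 = b - t - 2 from by omega]
            exact hm
          · exfalso
            rw [← e1] at hm
            rw [show a + t + 1 + 1 = (a + t) + 2 from by omega] at hm
            exact NE2 (a + t) hm
      rcases Nat.even_or_odd d with ⟨m, hm⟩ | ⟨m, hm⟩
      · have hm1 : 1 ≤ m := by omega
        obtain ⟨e1, _⟩ := R (m - 1) (by omega)
        rw [show b - (m - 1) = (a + (m - 1)) + 2 from by omega] at e1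
        exact NE2 (a + (m-1)) e1.symm
      · have hm1 : 1 ≤ m := by omega
        obtain ⟨e1, _⟩ := R m (by omega)
        rw [show b - m = (a + m) + 1 from by omega] at e1
        exact NE1 (a + m) e1.symm
    · -- forward case
      have hPab : P a = P b := Pmk _ _ heq hf
      have h0d : P 0 = P d := bwdshift d a (by rw [show a + d = b from by omega]; exact hPab)
      exact hmin d (by omega) ⟨by omega, h0d.symm⟩
  have inj : ∀ k, k < n → ∀ l, l < n → g k = g l → k = l := by
    intro k hk l hl he
    by_contra hne
    rcases Nat.lt_or_ge k l with h | h
    · exact key k l h hl he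
    · exact key l k (by omega) hk he.symm
  have gIm : ∀ k, g k ∈ (Finset.range n).image g := by
    intro k
    rw [gmod k]
    exact Finset.mem_image_of_mem g (Finset.mem_range.mpr (Nat.mod_lt k (by omega)))
  have closed : ∀ x ∈ (Finset.range n).image g, D.ugNbrs x ⊆ (Finset.range n).image g := by
    intro x hx y hy
    obtain ⟨p, hp, rfl⟩ := Finset.mem_image.mp hx
    rw [nbrA p] at hy
    simp only [Finset.mem_insert, Finset.mem_singleton] at hy
    rcases hy with rfl | rfl
    · exact gIm (p + n - 1)
    · exact gIm (p + 1)
  have surj : ∀ v ∈ D.verts, ∃ p, p < n ∧ g p = v := by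
    intro v hv
    have hreach : Relation.ReflTransGen D.ugAdj (g 0) v := hconn (g 0) (gV 0) v hv
    have : v ∈ (Finset.range n).image g := by
      clear hv
      induction hreach with
      | refl => exact gIm 0
      | tail h1 h2 ih =>
        refine closed _ ih ?_
        rw [mem_ugNbrs]
        rcases h2.2.2 with h | h
        · exact Or.inr h
        · exact Or.inl h
    obtain ⟨p, hp, he⟩ := Finset.mem_image.mp this
    exact ⟨p, Finset.mem_range.mp hp, he⟩
  exact ⟨n, g, ⟨n3, gV, surj, inj, per, NBR⟩⟩

end Digraph'




namespace Digraph'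

variable {D : Digraph'} {n : ℕ} {g : ℕ → ℕ}

lemma CycEnum.npos (E : CycEnum D n g) : 0 < n := by have := E.n3; omega

lemma CycEnum.gmod (E : CycEnum D n g) : ∀ k, g k = g (k % n) := by
  have permul : ∀ m k, g (k + m * n) = g k := by
    intro m
    induction m with
    | zero => intro k; simp
    | succ m ih =>
      intro k
      rw [show k + (m+1) * n = (k + m * n) + n from by ring, E.per, ih]
  intro k
  conv_lhs => rw [show k = k % n + (k / n) * n from by rw [Nat.mod_add_div' k n]]
  exact permul (k / n) (k % n)

lemma CycEnum.geq (E : CycEnum D n g) {a b : ℕ} : g a = g b ↔ a % n = b % n := by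
  constructor
  · intro h
    rw [E.gmod a, E.gmod b] at h
    exact E.inj _ (Nat.mod_lt _ E.npos) _ (Nat.mod_lt _ E.npos) h
  · intro h
    rw [E.gmod a, E.gmod b, h]

lemma CycEnum.nbrA (E : CycEnum D n g) (p : ℕ) :
    D.ugNbrs (g p) = {g (p + n - 1), g (p + 1)} := by
  have h1 : p + n - 1 + 1 = p + n := by have := E.n3; omega
  have h2 : p + n - 1 + 2 = (p + 1) + n := by have := E.n3; omega
  have := E.nbrs (p + n - 1)
  rw [h1, h2, E.per (p+1), E.per p] at this
  exact this

/-- the arc indicators along the cycle -/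
lemma CycEnum.edge (E : CycEnum D n g) (k : ℕ) :
    (g k, g (k+1)) ∈ D.arcs ∨ (g (k+1), g k) ∈ D.arcs := by
  have : g k ∈ D.ugNbrs (g (k+1)) := by
    rw [E.nbrs k]
    exact Finset.mem_insert_self _ _
  rw [mem_ugNbrs] at this
  exact this

lemma CycEnum.inNbrs_subset (E : CycEnum D n g) (k : ℕ) :
    D.inNbrs (g (k+1)) ⊆ {g k, g (k+2)} := by
  intro x hx
  rw [← E.nbrs k]
  exact Finset.mem_union_left _ hx

lemma CycEnum.outNbrs_subset (E : CycEnum D n g) (k : ℕ) :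
    D.outNbrs (g (k+1)) ⊆ {g k, g (k+2)} := by
  intro x hx
  rw [← E.nbrs k]
  exact Finset.mem_union_right _ hx

lemma CycEnum.nediff (E : CycEnum D n g) (k m : ℕ) (hm1 : 0 < m) (hm2 : m < n) :
    g k ≠ g (k + m) := by
  intro h
  rw [E.geq] at h
  have hmod : k ≡ k + m [MOD n] := h
  have hdvd : n ∣ (k + m) - k := (Nat.modEq_iff_dvd' (by omega)).mp hmod
  have hdvd' : n ∣ m := by simpa using hdvd
  have := Nat.le_of_dvd hm1 hdvd'
  omega

lemma CycEnum.ne2 (E : CycEnum D n g) (k : ℕ) : g k ≠ g (k+2) := by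
  have hn := E.n3
  exact E.nediff k 2 (by omega) (by omega)

lemma CycEnum.ne1 (E : CycEnum D n g) (k : ℕ) : g k ≠ g (k+1) := by
  have hn := E.n3
  exact E.nediff k 1 (by omega) (by omega)

lemma CycEnum.inDeg_eq (E : CycEnum D n g) (k : ℕ) :
    D.inDeg (g (k+1)) =
      (if (g k, g (k+1)) ∈ D.arcs then 1 else 0) +
      (if (g (k+2), g (k+1)) ∈ D.arcs then 1 else 0) := by
  rw [inDeg_eq_card_inNbrs,
    card_subset_pair (E.ne2 k) (E.inNbrs_subset k)]
  congr 1 <;> simp [mem_inNbrs]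

lemma CycEnum.outDeg_eq (E : CycEnum D n g) (k : ℕ) :
    D.outDeg (g (k+1)) =
      (if (g (k+1), g k) ∈ D.arcs then 1 else 0) +
      (if (g (k+1), g (k+2)) ∈ D.arcs then 1 else 0) := by
  rw [outDeg_eq_card_outNbrs,
    card_subset_pair (E.ne2 k) (E.outNbrs_subset k)]
  congr 1 <;> simp [mem_outNbrs]

lemma CycEnum.card_verts (E : CycEnum D n g) : D.verts.card = n := by
  have h1 : D.verts = (Finset.range n).image g := by
    apply Finset.Subset.antisymm
    · intro v hv
      obtain ⟨p, hp, he⟩ := E.surj v hv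
      exact Finset.mem_image.mpr ⟨p, Finset.mem_range.mpr hp, he⟩
    · intro v hv
      obtain ⟨p, _, rfl⟩ := Finset.mem_image.mp hv
      exact E.mem p
  rw [h1, Finset.card_image_of_injOn, Finset.card_range]
  intro a ha b hb he
  exact E.inj a (Finset.mem_range.mp ha) b (Finset.mem_range.mp hb) he

/-- Positions relative to a base point `j`. -/
lemma CycEnum.pos_exists (E : CycEnum D n g) (j : ℕ) (v : ℕ) (hv : v ∈ D.verts) :
    ∃ p, p < n ∧ g (j + p) = v := by
  obtain ⟨q, hq, rfl⟩ := E.surj v hv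
  refine ⟨(q + n - j % n) % n, Nat.mod_lt _ E.npos, ?_⟩
  rw [E.geq]
  have hdm : n * (j / n) + j % n = j := Nat.div_add_mod j n
  have hjn : j % n < n := Nat.mod_lt _ E.npos
  conv_lhs => rw [Nat.add_mod, Nat.mod_mod_of_dvd _ dvd_rfl, ← Nat.add_mod]
  have hrw : j + (q + n - j % n) = q + n + n * (j / n) := by
    set M := n * (j / n) with hM
    set a := j % n with ha
    omega
  rw [hrw, Nat.add_mul_mod_self_left, Nat.add_mod_right, Nat.mod_eq_of_lt hq]

end Digraph'




namespace Digraph'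

variable {D : Digraph'} {n : ℕ} {g : ℕ → ℕ}

/-- position of a vertex relative to base `j`. -/
noncomputable def CycEnum.pos (E : CycEnum D n g) (j v : ℕ) : ℕ :=
  if hv : v ∈ D.verts then (E.pos_exists j v hv).choose else 0

lemma CycEnum.pos_lt (E : CycEnum D n g) (j v : ℕ) (hv : v ∈ D.verts) :
    E.pos j v < n := by
  rw [CycEnum.pos, dif_pos hv]
  exact (E.pos_exists j v hv).choose_spec.1

lemma CycEnum.g_pos (E : CycEnum D n g) (j v : ℕ) (hv : v ∈ D.verts) :
    g (j + E.pos j v) = v := by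
  rw [CycEnum.pos, dif_pos hv]
  exact (E.pos_exists j v hv).choose_spec.2

lemma CycEnum.pos_g (E : CycEnum D n g) (j p : ℕ) (hp : p < n) :
    E.pos j (g (j + p)) = p := by
  have hv : g (j + p) ∈ D.verts := E.mem _
  have h1 := E.g_pos j _ hv
  have h2 := E.pos_lt j _ hv
  rw [E.geq] at h1
  have := Nat.ModEq.add_left_cancel' j h1
  have h3 : E.pos j (g (j+p)) % n = E.pos j (g (j+p)) := Nat.mod_eq_of_lt h2
  have h4 : p % n = p := Nat.mod_eq_of_lt hp
  rw [Nat.ModEq] at this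
  omega

/-- a cycle is biconnected -/
lemma CycEnum.biconnected (E : CycEnum D n g) (hcyc : D.IsCycleUG) : D.Biconnected := by
  have hn := E.n3
  refine ⟨?_, hcyc.1, ?_⟩
  · rw [E.card_verts]; omega
  · intro x hx
    obtain ⟨j, hj, rfl⟩ := E.surj x hx
    have hverts : (D.del {g j}).verts = D.verts \ {g j} := by
      rw [del, induce]
      simp only [Finset.inter_sdiff_self]
      exact Finset.inter_eq_right.mpr (Finset.sdiff_subset)
    have hmem : ∀ p, 1 ≤ p → p ≤ n - 1 → g (j + p) ∈ (D.del {g j}).verts := by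
      intro p h1 h2
      rw [hverts, Finset.mem_sdiff, Finset.mem_singleton]
      refine ⟨E.mem _, ?_⟩
      intro he
      have : g (j + p) = g (j + 0) := by simpa using he
      rw [E.geq] at this
      have := Nat.ModEq.add_left_cancel' j this
      rw [Nat.ModEq] at this
      have h3 : p % n = p := Nat.mod_eq_of_lt (by omega)
      simp at this
      omega
    have hadj : ∀ p, 1 ≤ p → p ≤ n - 2 →
        (D.del {g j}).ugAdj (g (j + p)) (g (j + p + 1)) := by
      intro p h1 h2
      have hm1 := hmem p h1 (by omega)
      have hm2 : g (j + p + 1) ∈ (D.del {g j}).verts := by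
        rw [show j + p + 1 = j + (p+1) from by omega]
        exact hmem (p+1) (by omega) (by omega)
      refine ⟨hm1, hm2, ?_⟩
      have harc : ∀ a b : ℕ, (a, b) ∈ D.arcs → a ∈ (D.del {g j}).verts →
          b ∈ (D.del {g j}).verts → (a, b) ∈ (D.del {g j}).arcs := by
        intro a b hab ha hb
        rw [del, induce, Finset.mem_filter]
        rw [hverts] at ha hb
        exact ⟨hab, ha, hb⟩
      rcases E.edge (j + p) with h | h
      · exact Or.inl (harc _ _ h hm1 hm2)
      · exact Or.inr (harc _ _ h hm2 hm1)
    have hsymm : Symmetric (D.del {g j}).ugAdj := by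
      intro a b hab
      exact ⟨hab.2.1, hab.1, hab.2.2.symm⟩
    have hreach : ∀ p, 1 ≤ p → p ≤ n - 1 →
        Relation.ReflTransGen (D.del {g j}).ugAdj (g (j+1)) (g (j+p)) := by
      intro p h1 h2
      induction p with
      | zero => omega
      | succ p ih =>
        by_cases hp : p = 0
        · subst hp; exact Relation.ReflTransGen.refl
        · refine Relation.ReflTransGen.tail (ih (by omega) (by omega)) ?_
          rw [show j + (p + 1) = j + p + 1 from by omega]
          exact hadj p (by omega) (by omega)
    constructor
    · exact ⟨g (j+1), hmem 1 (by omega) (by omega)⟩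
    · intro u hu v hv
      have hpos : ∀ w, w ∈ (D.del {g j}).verts → ∃ p, 1 ≤ p ∧ p ≤ n - 1 ∧ g (j + p) = w := by
        intro w hw
        rw [hverts, Finset.mem_sdiff, Finset.mem_singleton] at hw
        obtain ⟨p, hp, he⟩ := E.pos_exists j w hw.1
        refine ⟨p, ?_, by omega, he⟩
        rcases Nat.eq_zero_or_pos p with rfl | h
        · exfalso; apply hw.2; rw [← he]; simp
        · omega
      obtain ⟨p, hp1, hp2, rfl⟩ := hpos u hu
      obtain ⟨q, hq1, hq2, rfl⟩ := hpos v hv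
      have h1 := hreach p hp1 hp2
      have h2 := hreach q hq1 hq2
      exact Relation.ReflTransGen.trans
        ((@Relation.ReflTransGen.stdSymm _ _ ⟨hsymm⟩).symm _ _ h1) h2

end Digraph'




namespace Digraph'

def flip2 : Fin 2 → Fin 2 := fun i => if i = 0 then 1 else 0

lemma flip2_ne (i : Fin 2) : flip2 i ≠ i := by fin_cases i <;> simp [flip2]

lemma flip2_flip2 (i : Fin 2) : flip2 (flip2 i) = i := by fin_cases i <;> simp [flip2]

lemma eq_flip2_of_ne {i j : Fin 2} (h : j ≠ i) : j = flip2 i := by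
  fin_cases i <;> fin_cases j <;> simp_all [flip2]

variable {D : Digraph'} {n : ℕ} {g : ℕ → ℕ}

lemma dicolourable_of_orders (D : Digraph') (F : Fin 2 → ℕ → ℕ × ℕ)
    (α : ℕ → Fin 2) (r : Fin 2 → ℕ → ℕ)
    (h : ∀ i : Fin 2, ∀ v ∈ D.verts, α v = i →
      ((D.induce ((D.verts.filter (fun w => α w = i)).filter
          (fun w => r i v ≤ r i w))).inDeg v < (F i v).1 ∨
       (D.induce ((D.verts.filter (fun w => α w = i)).filter
          (fun w => r i v ≤ r i w))).outDeg v < (F i v).2)) :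
    D.Dicolourable 2 F := by
  refine ⟨α, fun i => elim D _ (F i) (r i) ?_⟩
  intro v hv hvX
  exact h i v hv (Finset.mem_filter.mp hvX).2

lemma zero_case {u : ℕ} {Y : Finset ℕ} {a b : ℕ}
    (hsub_in : D.inNbrs u ⊆ {a, b}) (hsub_out : D.outNbrs u ⊆ {a, b})
    (ha : a ∉ Y) (hb : b ∉ Y) {f : ℕ × ℕ} (hf : f ≠ (0, 0)) :
    (D.induce Y).inDeg u < f.1 ∨ (D.induce Y).outDeg u < f.2 := by
  have hin : D.inNbrs u ∩ Y = ∅ := by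
    apply Finset.eq_empty_of_forall_notMem
    intro x hx
    rw [Finset.mem_inter] at hx
    have := hsub_in hx.1
    simp only [Finset.mem_insert, Finset.mem_singleton] at this
    rcases this with rfl | rfl
    · exact ha hx.2
    · exact hb hx.2
  have hout : D.outNbrs u ∩ Y = ∅ := by
    apply Finset.eq_empty_of_forall_notMem
    intro x hx
    rw [Finset.mem_inter] at hx
    have := hsub_out hx.1
    simp only [Finset.mem_insert, Finset.mem_singleton] at this
    rcases this with rfl | rfl
    · exact ha hx.2
    · exact hb hx.2
  have h1 : (D.induce Y).inDeg u = 0 := by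
    have := inDeg_induce_le (D := D) Y u
    rw [hin] at this
    simpa using this
  have h2 : (D.induce Y).outDeg u = 0 := by
    have := outDeg_induce_le (D := D) Y u
    rw [hout] at this
    simpa using this
  rcases Nat.eq_zero_or_pos f.1 with hz | hp
  · rcases Nat.eq_zero_or_pos f.2 with hz2 | hp2
    · exfalso; apply hf; ext <;> simp [hz, hz2]
    · exact Or.inr (by omega)
  · exact Or.inl (by omega)

lemma strict_case {u w : ℕ} {Y : Finset ℕ}
    (hw : (w, u) ∈ D.arcs ∨ (u, w) ∈ D.arcs) (hwY : w ∉ Y) {f : ℕ × ℕ}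
    (hf1 : f.1 = D.inDeg u) (hf2 : f.2 = D.outDeg u) :
    (D.induce Y).inDeg u < f.1 ∨ (D.induce Y).outDeg u < f.2 := by
  rcases hw with hw | hw
  · left
    calc (D.induce Y).inDeg u ≤ (D.inNbrs u ∩ Y).card := inDeg_induce_le Y u
    _ < (D.inNbrs u).card := card_inter_lt_of_not_mem (mem_inNbrs.mpr hw) hwY
    _ = f.1 := by rw [hf1, inDeg_eq_card_inNbrs]
  · right
    calc (D.induce Y).outDeg u ≤ (D.outNbrs u ∩ Y).card := outDeg_induce_le Y u
    _ < (D.outNbrs u).card := card_inter_lt_of_not_mem (mem_outNbrs.mpr hw) hwY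
    _ = f.2 := by rw [hf2, outDeg_eq_card_outNbrs]

lemma CycEnum.deg_ne_zero (E : CycEnum D n g) (k : ℕ) :
    (D.inDeg (g (k+1)), D.outDeg (g (k+1))) ≠ (0, 0) := by
  intro hc
  rw [Prod.mk.injEq] at hc
  obtain ⟨h1, h2⟩ := hc
  rcases E.edge k with h | h
  · rw [E.inDeg_eq k] at h1; simp [h] at h1
  · rw [E.outDeg_eq k] at h2; simp [h] at h2

lemma full_comp {F : Fin 2 → ℕ → ℕ × ℕ} {v : ℕ} {e : Fin 2}
    (ht1 : (F 0 v).1 + (F 1 v).1 = D.inDeg v)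
    (ht2 : (F 0 v).2 + (F 1 v).2 = D.outDeg v)
    (he : F (flip2 e) v = (0, 0)) :
    (F e v).1 = D.inDeg v ∧ (F e v).2 = D.outDeg v := by
  fin_cases e <;> simp [flip2] at he <;>
    rw [he] at ht1 ht2 <;> simp at ht1 ht2 <;> exact ⟨ht1, ht2⟩

end Digraph'




namespace Digraph'

variable {D : Digraph'} {n : ℕ} {g : ℕ → ℕ}

lemma scheme1 (E : CycEnum D n g) (F : Fin 2 → ℕ → ℕ × ℕ)
    (htight : ∀ v ∈ D.verts,
      (F 0 v).1 + (F 1 v).1 = D.inDeg v ∧ (F 0 v).2 + (F 1 v).2 = D.outDeg v)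
    (j : ℕ) (e : Fin 2)
    (hz : F (flip2 e) (g j) = (0, 0))
    (hleft : ∀ e' : Fin 2, F (flip2 e') (g (j + n - 1)) = (0, 0) → e' ≠ e) :
    D.Dicolourable 2 F := by
  have hn := E.n3
  set fullAt : ℕ → Prop := fun v => F 0 v = (0,0) ∨ F 1 v = (0,0) with hfullAt
  set cOf : ℕ → Fin 2 := fun v => if F 1 v = (0,0) then 0 else 1 with hcOf
  have cOf_spec : ∀ v, fullAt v → F (flip2 (cOf v)) v = (0,0) := by
    intro v hv
    by_cases h1 : F 1 v = (0,0)
    · simp only [hcOf, if_pos h1]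
      simpa [flip2] using h1
    · have h0 : F 0 v = (0,0) := by
        rcases hv with h | h
        · exact h
        · exact absurd h h1
      simp only [hcOf, if_neg h1]
      simpa [flip2] using h0
  set τ : ℕ → Fin 2 := fun t => Nat.rec
      (if fullAt (g (j + n - 1)) then cOf (g (j + n - 1)) else flip2 e)
      (fun t c => if fullAt (g (j + n - 2 - t)) then cOf (g (j + n - 2 - t)) else flip2 c) t
    with hτ
  have τ0 : τ 0 = if fullAt (g (j + n - 1)) then cOf (g (j + n - 1)) else flip2 e := rfl
  have τs : ∀ t, τ (t+1) =
      if fullAt (g (j + n - 2 - t)) then cOf (g (j + n - 2 - t)) else flip2 (τ t) :=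
    fun t => rfl
  set σ : ℕ → Fin 2 := fun p => if p = 0 then e else τ (n - 1 - p) with hσ
  set α : ℕ → Fin 2 := fun v => if v ∈ D.verts then σ (E.pos j v) else e with hα
  have hαg : ∀ p, p < n → α (g (j + p)) = σ p := by
    intro p hp
    rw [hα]
    simp only [if_pos (E.mem _), E.pos_g j p hp]
  have hα0 : α (g j) = e := by
    have h := hαg 0 (by omega)
    rw [Nat.add_zero] at h
    rw [h]
    simp [hσ]
  have hrec : ∀ p, 1 ≤ p → p ≤ n - 1 →
      α (g (j + p)) = if fullAt (g (j + p)) then cOf (g (j + p))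
        else flip2 (α (g (j + p + 1))) := by
    intro p h1 h2
    rw [hαg p (by omega)]
    by_cases hpn : p = n - 1
    · subst hpn
      simp only [hσ, if_neg (show ¬(n - 1 = 0) from by omega)]
      rw [show n - 1 - (n - 1) = 0 from by omega, τ0]
      have hgj : g (j + (n - 1) + 1) = g j := by
        rw [show j + (n-1) + 1 = j + n from by omega, E.per]
      rw [hgj, hα0]
      rw [show j + n - 1 = j + (n-1) from by omega]
    · have hτα : τ (n - 2 - p) = α (g (j + p + 1)) := by
        rw [show j + p + 1 = j + (p+1) from by omega, hαg (p+1) (by omega)]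
        simp only [hσ, if_neg (show ¬(p + 1 = 0) from by omega)]
        rw [show n - 1 - (p+1) = n - 2 - p from by omega]
      simp only [hσ, if_neg (show ¬(p = 0) from by omega)]
      rw [show n - 1 - p = (n - 2 - p) + 1 from by omega, τs]
      rw [show j + n - 2 - (n - 2 - p) = j + p from by omega, hτα]
  apply dicolourable_of_orders D F α (fun _ => E.pos j)
  intro i v hv hαv
  obtain ⟨p, hp, hgp⟩ := E.pos_exists j v hv
  have hposv : E.pos j v = p := by rw [← hgp, E.pos_g j p hp]
  by_cases hp0 : p = 0
  · -- v = g j, the vertex z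
    subst hp0
    rw [Nat.add_zero] at hgp
    have hie : i = e := by rw [← hαv, ← hgp, hα0]
    have hvn : g (j + n) = v := by rw [E.per, hgp]
    -- neighbour subsets
    have hsin := E.inNbrs_subset (j + n - 1)
    have hsout := E.outNbrs_subset (j + n - 1)
    rw [show j + n - 1 + 1 = j + n from by omega,
        show j + n - 1 + 2 = (j + 1) + n from by omega, E.per (j+1), hvn] at hsin hsout
    -- the left neighbour w
    set w := g (j + n - 1) with hw
    have hαw : α w ≠ e := by
      have h := hαg (n-1) (by omega)
      rw [show j + (n - 1) = j + n - 1 from by omega, ← hw] at h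
      simp only [hσ, if_neg (show ¬(n - 1 = 0) from by omega)] at h
      rw [show n - 1 - (n-1) = 0 from by omega, τ0] at h
      by_cases hf : fullAt w
      · rw [h, if_pos hf]
        exact hleft _ (cOf_spec _ hf)
      · rw [h, if_neg hf]
        exact flip2_ne e
    have hwY : w ∉ (D.verts.filter fun x => α x = i).filter
        (fun x => E.pos j v ≤ E.pos j x) := by
      intro hmem
      simp only [Finset.mem_filter] at hmem
      exact hαw (hie ▸ hmem.1.2)
    have hedge : (w, v) ∈ D.arcs ∨ (v, w) ∈ D.arcs := by
      have h := E.edge (j + n - 1)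
      rw [show j + n - 1 + 1 = j + n from by omega, hvn] at h
      exact h
    have hzv : F (flip2 e) v = (0,0) := by rw [← hgp]; exact hz
    have hfc := full_comp (htight v hv).1 (htight v hv).2 hzv
    rw [← hie] at hfc
    exact strict_case hedge hwY hfc.1 hfc.2
  · -- p ≥ 1
    have hp1 : 1 ≤ p := by omega
    have hgpv : g (j + p) = v := hgp
    -- neighbour subsets
    have hsin := E.inNbrs_subset (j + p - 1)
    have hsout := E.outNbrs_subset (j + p - 1)
    rw [show j + p - 1 + 1 = j + p from by omega,
        show j + p - 1 + 2 = j + p + 1 from by omega, hgpv] at hsin hsout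
    set lN := g (j + p - 1) with hlN
    set rN := g (j + p + 1) with hrN
    have hlNY : lN ∉ (D.verts.filter fun x => α x = i).filter
        (fun x => E.pos j v ≤ E.pos j x) := by
      intro hmem
      simp only [Finset.mem_filter] at hmem
      have hposl : E.pos j lN = p - 1 := by
        rw [hlN, show j + p - 1 = j + (p - 1) from by omega]
        exact E.pos_g j (p-1) (by omega)
      have := hmem.2
      rw [hposv, hposl] at this
      omega
    have hedge : (lN, v) ∈ D.arcs ∨ (v, lN) ∈ D.arcs := by
      have h := E.edge (j + p - 1)
      rw [show j + p - 1 + 1 = j + p from by omega, hgpv] at h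
      tauto
    have hrecv := hrec p hp1 (by omega)
    rw [hgpv] at hrecv
    by_cases hfv : fullAt v
    · have hi : i = cOf v := by rw [← hαv, hrecv, if_pos hfv]
      have hfc := full_comp (htight v hv).1 (htight v hv).2 (cOf_spec v hfv)
      rw [← hi] at hfc
      by_cases hrY : rN ∈ (D.verts.filter fun x => α x = i).filter
          (fun x => E.pos j v ≤ E.pos j x)
      · exact strict_case hedge hlNY hfc.1 hfc.2
      · refine zero_case hsin hsout hlNY hrY ?_
        have hdnz := E.deg_ne_zero (j + p - 1)
        rw [show j + p - 1 + 1 = j + p from by omega, hgpv] at hdnz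
        intro hcc
        apply hdnz
        have h1 : D.inDeg v = 0 := by
          rw [← hfc.1, hcc]
        have h2 : D.outDeg v = 0 := by
          rw [← hfc.2, hcc]
        rw [h1, h2]
    · have hmix : F 0 v ≠ (0,0) ∧ F 1 v ≠ (0,0) := by
        constructor
        · intro h; exact hfv (Or.inl h)
        · intro h; exact hfv (Or.inr h)
      have hflipv : α v = flip2 (α rN) := by rw [hrecv, if_neg hfv]
      have hrNY : rN ∉ (D.verts.filter fun x => α x = i).filter
          (fun x => E.pos j v ≤ E.pos j x) := by
        intro hmem
        simp only [Finset.mem_filter] at hmem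
        have : i = flip2 i := by
          conv_lhs => rw [← hαv]
          rw [hflipv, hmem.1.2]
        exact flip2_ne i this.symm
      refine zero_case hsin hsout hlNY hrNY ?_
      fin_cases i
      · exact hmix.1
      · exact hmix.2

end Digraph'




namespace Digraph'

variable {D : Digraph'} {n : ℕ} {g : ℕ → ℕ}

lemma half_bound_in {u a b : ℕ} {Y : Finset ℕ}
    (hsub : D.inNbrs u ⊆ {a, b}) (hbY : b ∉ Y) :
    (D.induce Y).inDeg u ≤ (if (a, u) ∈ D.arcs then 1 else 0) := by
  refine le_trans (inDeg_induce_le Y u) ?_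
  have hss : D.inNbrs u ∩ Y ⊆ (if (a, u) ∈ D.arcs then {a} else ∅) := by
    intro x hx
    rw [Finset.mem_inter] at hx
    have hx' := hsub hx.1
    simp only [Finset.mem_insert, Finset.mem_singleton] at hx'
    rcases hx' with rfl | rfl
    · rw [if_pos (mem_inNbrs.mp hx.1)]
      exact Finset.mem_singleton_self _
    · exact absurd hx.2 hbY
  refine le_trans (Finset.card_le_card hss) ?_
  split_ifs
  · simp
  · simp

lemma half_bound_out {u a b : ℕ} {Y : Finset ℕ}
    (hsub : D.outNbrs u ⊆ {a, b}) (hbY : b ∉ Y) :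
    (D.induce Y).outDeg u ≤ (if (u, a) ∈ D.arcs then 1 else 0) := by
  refine le_trans (outDeg_induce_le Y u) ?_
  have hss : D.outNbrs u ∩ Y ⊆ (if (u, a) ∈ D.arcs then {a} else ∅) := by
    intro x hx
    rw [Finset.mem_inter] at hx
    have hx' := hsub hx.1
    simp only [Finset.mem_insert, Finset.mem_singleton] at hx'
    rcases hx' with rfl | rfl
    · rw [if_pos (mem_outNbrs.mp hx.1)]
      exact Finset.mem_singleton_self _
    · exact absurd hx.2 hbY
  refine le_trans (Finset.card_le_card hss) ?_
  split_ifs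
  · simp
  · simp

lemma CycEnum.exists_transition (E : CycEnum D n g) (Q : ℕ → Prop) (a b : ℕ)
    (ha : Q (g a)) (hb : ¬ Q (g b)) :
    ∃ m, ¬ Q (g m) ∧ Q (g (m+1)) := by
  obtain ⟨p, hp, hgp⟩ := E.pos_exists b (g a) (E.mem a)
  have hex : ∃ t, Q (g (b + t)) := ⟨p, by rw [hgp]; exact ha⟩
  have ht : Q (g (b + Nat.find hex)) := Nat.find_spec hex
  have ht0 : Nat.find hex ≠ 0 := by
    intro e
    rw [e, Nat.add_zero] at ht
    exact hb ht
  have htm : ¬ Q (g (b + (Nat.find hex - 1))) := Nat.find_min hex (by omega)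
  exact ⟨b + (Nat.find hex - 1), htm,
    by rw [show b + (Nat.find hex - 1) + 1 = b + Nat.find hex from by omega]; exact ht⟩

lemma scheme_even (E : CycEnum D n g) (F : Fin 2 → ℕ → ℕ × ℕ)
    (hmix : ∀ v ∈ D.verts, F 0 v ≠ (0,0) ∧ F 1 v ≠ (0,0))
    (hnev : n % 2 = 0) : D.Dicolourable 2 F := by
  have hn := E.n3
  set α : ℕ → Fin 2 := fun v => if E.pos 0 v % 2 = 0 then 0 else 1 with hα
  apply dicolourable_of_orders D F α (fun _ _ => 0)
  intro i v hv hαv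
  obtain ⟨p, hp, hgp⟩ := E.pos_exists 0 v hv
  rw [Nat.zero_add] at hgp
  have hαq : ∀ q, q < n → α (g q) = if q % 2 = 0 then 0 else 1 := by
    intro q hq
    have h := E.pos_g 0 q hq
    rw [Nat.zero_add] at h
    rw [hα]
    simp only [h]
  obtain ⟨a, b, hsin, hsout, hane, hbne⟩ :
      ∃ a b, D.inNbrs v ⊆ {a, b} ∧ D.outNbrs v ⊆ {a, b} ∧ α a ≠ i ∧ α b ≠ i := by
    by_cases hp0 : p = 0
    · subst hp0
      have hsin := E.inNbrs_subset (n-1)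
      have hsout := E.outNbrs_subset (n-1)
      have hgn : g (n - 1 + 1) = v := by
        rw [show n - 1 + 1 = 0 + n from by omega, E.per]
        exact hgp
      rw [hgn, show n - 1 + 2 = 1 + n from by omega, E.per 1] at hsin hsout
      refine ⟨g (n-1), g 1, hsin, hsout, ?_, ?_⟩
      · rw [hαq (n-1) (by omega), ← hαv, ← hgp, hαq 0 (by omega)]
        rw [show (n-1) % 2 = 1 from by omega, show 0 % 2 = 0 from by omega]
        decide
      · rw [hαq 1 (by omega), ← hαv, ← hgp, hαq 0 (by omega)]
        rw [show 1 % 2 = 1 from by omega, show 0 % 2 = 0 from by omega]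
        decide
    · have hsin := E.inNbrs_subset (p-1)
      have hsout := E.outNbrs_subset (p-1)
      rw [show p - 1 + 1 = p from by omega, show p - 1 + 2 = p + 1 from by omega, hgp]
        at hsin hsout
      refine ⟨g (p-1), g (p+1), hsin, hsout, ?_, ?_⟩
      · rw [hαq (p-1) (by omega), ← hαv, ← hgp, hαq p hp]
        rcases Nat.mod_two_eq_zero_or_one p with h | h
        · rw [h, show (p-1) % 2 = 1 from by omega]
          decide
        · rw [h, show (p-1) % 2 = 0 from by omega]
          decide
      · by_cases hpn : p + 1 = n
        · have hg0 : g (p+1) = g 0 := by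
            rw [hpn, show n = 0 + n from by omega, E.per]
          rw [hg0, hαq 0 (by omega), ← hαv, ← hgp, hαq p hp]
          rw [show p % 2 = 1 from by omega, show 0 % 2 = 0 from by omega]
          decide
        · rw [hαq (p+1) (by omega), ← hαv, ← hgp, hαq p hp]
          rcases Nat.mod_two_eq_zero_or_one p with h | h
          · rw [h, show (p+1) % 2 = 1 from by omega]
            decide
          · rw [h, show (p+1) % 2 = 0 from by omega]
            decide
  refine zero_case hsin hsout ?_ ?_ ?_
  · intro hmem
    simp only [Finset.mem_filter] at hmem
    exact hane hmem.1.2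
  · intro hmem
    simp only [Finset.mem_filter] at hmem
    exact hbne hmem.1.2
  · fin_cases i
    · exact (hmix v hv).1
    · exact (hmix v hv).2

end Digraph'




namespace Digraph'

variable {D : Digraph'} {n : ℕ} {g : ℕ → ℕ}

lemma scheme_defect (E : CycEnum D n g) (F : Fin 2 → ℕ → ℕ × ℕ)
    (hmix : ∀ v ∈ D.verts, F 0 v ≠ (0,0) ∧ F 1 v ≠ (0,0))
    (hodd : n % 2 = 1) (k₀ : ℕ)
    (htol : (∃ i₀ : Fin 2,
        (if (g k₀, g (k₀+1)) ∈ D.arcs then 1 else 0) < (F i₀ (g (k₀+1))).1 ∨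
        (if (g (k₀+1), g k₀) ∈ D.arcs then 1 else 0) < (F i₀ (g (k₀+1))).2) ∨
      (∃ i₀ : Fin 2,
        (if (g (k₀+1), g k₀) ∈ D.arcs then 1 else 0) < (F i₀ (g k₀)).1 ∨
        (if (g k₀, g (k₀+1)) ∈ D.arcs then 1 else 0) < (F i₀ (g k₀)).2)) :
    D.Dicolourable 2 F := by
  have hn := E.n3
  rcases htol with ⟨i₀, htolA⟩ | ⟨i₀, htolB⟩
  all_goals
    set α : ℕ → Fin 2 := fun v => if E.pos (k₀+1) v % 2 = 0 then i₀ else flip2 i₀ with hα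
    have hαq : ∀ q, q < n → α (g (k₀+1+q)) = if q % 2 = 0 then i₀ else flip2 i₀ := by
      intro q hq
      have h := E.pos_g (k₀+1) q hq
      rw [hα]
      simp only [h]
  -- Branch A : tolerant endpoint g (k₀+1)
  · apply dicolourable_of_orders D F α (fun _ => E.pos (k₀+1))
    intro i v hv hαv
    obtain ⟨p, hp, hgp⟩ := E.pos_exists (k₀+1) v hv
    have hposv : E.pos (k₀+1) v = p := by rw [← hgp, E.pos_g _ p hp]
    rcases Nat.mod_two_eq_zero_or_one p with hpe | hpo
    · -- p even : colour i₀
      have hii : i = i₀ := by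
        rw [← hαv, ← hgp, hαq p hp, if_pos hpe]
      by_cases hp0 : p = 0
      · -- v = g (k₀+1), use the tolerance
        subst hp0
        rw [Nat.add_zero] at hgp
        have hsin := E.inNbrs_subset k₀
        have hsout := E.outNbrs_subset k₀
        rw [hgp] at hsin hsout
        have hbcol : α (g (k₀+2)) = flip2 i₀ := by
          have h := hαq 1 (by omega)
          rw [show k₀+1+1 = k₀+2 from by omega] at h
          rw [h]
          norm_num
        have hbY : g (k₀+2) ∉ (D.verts.filter fun w => α w = i).filter
            (fun w => E.pos (k₀+1) v ≤ E.pos (k₀+1) w) := by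
          intro hmem
          simp only [Finset.mem_filter] at hmem
          rw [hbcol, hii] at hmem
          exact flip2_ne i₀ hmem.1.2
        rw [hgp, ← hii] at htolA
        rcases htolA with h1 | h1
        · exact Or.inl (lt_of_le_of_lt (half_bound_in hsin hbY) h1)
        · exact Or.inr (lt_of_le_of_lt (half_bound_out hsout hbY) h1)
      · -- p even, p ≥ 2 : zero case
        have hp2 : 2 ≤ p := by omega
        have hsin := E.inNbrs_subset (k₀+1+p-1)
        have hsout := E.outNbrs_subset (k₀+1+p-1)
        rw [show k₀+1+p-1+1 = k₀+1+p from by omega,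
            show k₀+1+p-1+2 = k₀+1+(p+1) from by omega, hgp] at hsin hsout
        have hlcol : α (g (k₀+1+p-1)) = flip2 i₀ := by
          have h := hαq (p-1) (by omega)
          rw [show k₀+1+(p-1) = k₀+1+p-1 from by omega] at h
          rw [h, if_neg (by omega : ¬((p-1) % 2 = 0))]
        have hlY : g (k₀+1+p-1) ∉ (D.verts.filter fun w => α w = i).filter
            (fun w => E.pos (k₀+1) v ≤ E.pos (k₀+1) w) := by
          intro hmem
          simp only [Finset.mem_filter] at hmem
          rw [hlcol, hii] at hmem
          exact flip2_ne i₀ hmem.1.2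
        have hrY : g (k₀+1+(p+1)) ∉ (D.verts.filter fun w => α w = i).filter
            (fun w => E.pos (k₀+1) v ≤ E.pos (k₀+1) w) := by
          intro hmem
          simp only [Finset.mem_filter] at hmem
          by_cases hpn : p = n - 1
          · have hpos0 : E.pos (k₀+1) (g (k₀+1+(p+1))) = 0 := by
              have hper : g (k₀+1+(p+1)) = g (k₀+1+0) := by
                rw [show k₀+1+(p+1) = (k₀+1) + n from by omega, E.per, Nat.add_zero]
              rw [hper]
              exact E.pos_g _ 0 (by omega)
            rw [hposv, hpos0] at hmem
            omega
          · have hrcol : α (g (k₀+1+(p+1))) = flip2 i₀ := by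
              rw [hαq (p+1) (by omega), if_neg (by omega : ¬((p+1) % 2 = 0))]
            rw [hrcol, hii] at hmem
            exact flip2_ne i₀ hmem.1.2
        refine zero_case hsin hsout hlY hrY ?_
        fin_cases i
        · exact (hmix v hv).1
        · exact (hmix v hv).2
    · -- p odd : colour flip2 i₀, zero case
      have hii : i = flip2 i₀ := by
        rw [← hαv, ← hgp, hαq p hp, if_neg (by omega : ¬(p % 2 = 0))]
      have hp1 : 1 ≤ p := by omega
      have hpn1 : p + 1 < n := by omega
      have hsin := E.inNbrs_subset (k₀+1+p-1)
      have hsout := E.outNbrs_subset (k₀+1+p-1)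
      rw [show k₀+1+p-1+1 = k₀+1+p from by omega,
          show k₀+1+p-1+2 = k₀+1+(p+1) from by omega, hgp] at hsin hsout
      have hlcol : α (g (k₀+1+p-1)) = i₀ := by
        have h := hαq (p-1) (by omega)
        rw [show k₀+1+(p-1) = k₀+1+p-1 from by omega] at h
        rw [h, if_pos (by omega : (p-1) % 2 = 0)]
      have hrcol : α (g (k₀+1+(p+1))) = i₀ := by
        rw [hαq (p+1) (by omega), if_pos (by omega : (p+1) % 2 = 0)]
      have hlY : g (k₀+1+p-1) ∉ (D.verts.filter fun w => α w = i).filter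
          (fun w => E.pos (k₀+1) v ≤ E.pos (k₀+1) w) := by
        intro hmem
        simp only [Finset.mem_filter] at hmem
        rw [hlcol, hii] at hmem
        exact flip2_ne i₀ hmem.1.2.symm
      have hrY : g (k₀+1+(p+1)) ∉ (D.verts.filter fun w => α w = i).filter
          (fun w => E.pos (k₀+1) v ≤ E.pos (k₀+1) w) := by
        intro hmem
        simp only [Finset.mem_filter] at hmem
        rw [hrcol, hii] at hmem
        exact flip2_ne i₀ hmem.1.2.symm
      refine zero_case hsin hsout hlY hrY ?_
      fin_cases i
      · exact (hmix v hv).1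
      · exact (hmix v hv).2
  -- Branch B : tolerant endpoint g k₀
  · apply dicolourable_of_orders D F α (fun _ w => if w = g k₀ then 0 else 1)
    intro i v hv hαv
    obtain ⟨p, hp, hgp⟩ := E.pos_exists (k₀+1) v hv
    have hposgk : E.pos (k₀+1) (g k₀) = n - 1 := by
      have hper : g k₀ = g (k₀+1+(n-1)) := by
        rw [show k₀+1+(n-1) = k₀ + n from by omega, E.per]
      rw [hper]
      exact E.pos_g _ (n-1) (by omega)
    rcases Nat.mod_two_eq_zero_or_one p with hpe | hpo
    · -- p even : colour i₀
      have hii : i = i₀ := by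
        rw [← hαv, ← hgp, hαq p hp, if_pos hpe]
      by_cases hpn : p = n - 1
      · -- v = g k₀ : use the tolerance
        have hvk : g k₀ = v := by
          rw [← hgp, hpn]
          rw [show k₀+1+(n-1) = k₀ + n from by omega, E.per]
        have hsin := E.inNbrs_subset (k₀+n-1)
        have hsout := E.outNbrs_subset (k₀+n-1)
        rw [show k₀+n-1+1 = k₀+n from by omega,
            show k₀+n-1+2 = (k₀+1)+n from by omega, E.per (k₀+1),
            show k₀ + n = k₀ + n from rfl] at hsin hsout
        have hgkn : g (k₀ + n) = v := by rw [E.per]; exact hvk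
        rw [hgkn, Finset.pair_comm] at hsin hsout
        have hbcol : α (g (k₀+n-1)) = flip2 i₀ := by
          have h := hαq (n-2) (by omega)
          rw [show k₀+1+(n-2) = k₀+n-1 from by omega] at h
          rw [h, if_neg (by omega : ¬((n-2) % 2 = 0))]
        have hbY : g (k₀+n-1) ∉ (D.verts.filter fun w => α w = i).filter
            (fun w => (if v = g k₀ then 0 else 1) ≤ (if w = g k₀ then 0 else 1)) := by
          intro hmem
          simp only [Finset.mem_filter] at hmem
          rw [hbcol, hii] at hmem
          exact flip2_ne i₀ hmem.1.2
        rw [hvk, ← hii] at htolB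
        rcases htolB with h1 | h1
        · exact Or.inl (lt_of_le_of_lt (half_bound_in hsin hbY) h1)
        · exact Or.inr (lt_of_le_of_lt (half_bound_out hsout hbY) h1)
      · -- p even, p ≠ n-1 : zero case with g k₀ excluded by the order
        have hvne : v ≠ g k₀ := by
          intro he
          rw [he] at hgp
          have := E.pos_g (k₀+1) p hp
          rw [hgp, hposgk] at this
          omega
        have hgkY : g k₀ ∉ (D.verts.filter fun w => α w = i).filter
            (fun w => (if v = g k₀ then 0 else 1) ≤ (if w = g k₀ then 0 else 1)) := by
          intro hmem
          simp only [Finset.mem_filter] at hmem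
          have h2 := hmem.2
          rw [if_neg hvne] at h2
          simp at h2
        by_cases hp0 : p = 0
        · subst hp0
          rw [Nat.add_zero] at hgp
          have hsin := E.inNbrs_subset k₀
          have hsout := E.outNbrs_subset k₀
          rw [hgp] at hsin hsout
          have hbcol : α (g (k₀+2)) = flip2 i₀ := by
            have h := hαq 1 (by omega)
            rw [show k₀+1+1 = k₀+2 from by omega] at h
            rw [h]
            norm_num
          have hbY : g (k₀+2) ∉ (D.verts.filter fun w => α w = i).filter
              (fun w => (if v = g k₀ then 0 else 1) ≤ (if w = g k₀ then 0 else 1)) := by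
            intro hmem
            simp only [Finset.mem_filter] at hmem
            rw [hbcol, hii] at hmem
            exact flip2_ne i₀ hmem.1.2
          refine zero_case hsin hsout hgkY hbY ?_
          fin_cases i
          · exact (hmix v hv).1
          · exact (hmix v hv).2
        · have hp2 : 2 ≤ p := by omega
          have hple : p ≤ n - 3 := by omega
          have hsin := E.inNbrs_subset (k₀+1+p-1)
          have hsout := E.outNbrs_subset (k₀+1+p-1)
          rw [show k₀+1+p-1+1 = k₀+1+p from by omega,
              show k₀+1+p-1+2 = k₀+1+(p+1) from by omega, hgp] at hsin hsout
          have hlcol : α (g (k₀+1+p-1)) = flip2 i₀ := by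
            have h := hαq (p-1) (by omega)
            rw [show k₀+1+(p-1) = k₀+1+p-1 from by omega] at h
            rw [h, if_neg (by omega : ¬((p-1) % 2 = 0))]
          have hrcol : α (g (k₀+1+(p+1))) = flip2 i₀ := by
            rw [hαq (p+1) (by omega), if_neg (by omega : ¬((p+1) % 2 = 0))]
          have hlY : g (k₀+1+p-1) ∉ (D.verts.filter fun w => α w = i).filter
              (fun w => (if v = g k₀ then 0 else 1) ≤ (if w = g k₀ then 0 else 1)) := by
            intro hmem
            simp only [Finset.mem_filter] at hmem
            rw [hlcol, hii] at hmem
            exact flip2_ne i₀ hmem.1.2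
          have hrY : g (k₀+1+(p+1)) ∉ (D.verts.filter fun w => α w = i).filter
              (fun w => (if v = g k₀ then 0 else 1) ≤ (if w = g k₀ then 0 else 1)) := by
            intro hmem
            simp only [Finset.mem_filter] at hmem
            rw [hrcol, hii] at hmem
            exact flip2_ne i₀ hmem.1.2
          refine zero_case hsin hsout hlY hrY ?_
          fin_cases i
          · exact (hmix v hv).1
          · exact (hmix v hv).2
    · -- p odd : colour flip2 i₀, zero case
      have hii : i = flip2 i₀ := by
        rw [← hαv, ← hgp, hαq p hp, if_neg (by omega : ¬(p % 2 = 0))]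
      have hp1 : 1 ≤ p := by omega
      have hpn1 : p + 1 < n := by omega
      have hsin := E.inNbrs_subset (k₀+1+p-1)
      have hsout := E.outNbrs_subset (k₀+1+p-1)
      rw [show k₀+1+p-1+1 = k₀+1+p from by omega,
          show k₀+1+p-1+2 = k₀+1+(p+1) from by omega, hgp] at hsin hsout
      have hlcol : α (g (k₀+1+p-1)) = i₀ := by
        have h := hαq (p-1) (by omega)
        rw [show k₀+1+(p-1) = k₀+1+p-1 from by omega] at h
        rw [h, if_pos (by omega : (p-1) % 2 = 0)]
      have hrcol : α (g (k₀+1+(p+1))) = i₀ := by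
        rw [hαq (p+1) (by omega), if_pos (by omega : (p+1) % 2 = 0)]
      have hlY : g (k₀+1+p-1) ∉ (D.verts.filter fun w => α w = i).filter
          (fun w => (if v = g k₀ then 0 else 1) ≤ (if w = g k₀ then 0 else 1)) := by
        intro hmem
        simp only [Finset.mem_filter] at hmem
        rw [hlcol, hii] at hmem
        exact flip2_ne i₀ hmem.1.2.symm
      have hrY : g (k₀+1+(p+1)) ∉ (D.verts.filter fun w => α w = i).filter
          (fun w => (if v = g k₀ then 0 else 1) ≤ (if w = g k₀ then 0 else 1)) := by
        intro hmem
        simp only [Finset.mem_filter] at hmem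
        rw [hrcol, hii] at hmem
        exact flip2_ne i₀ hmem.1.2.symm
      refine zero_case hsin hsout hlY hrY ?_
      fin_cases i
      · exact (hmix v hv).1
      · exact (hmix v hv).2

end Digraph'




namespace Digraph'

variable {D : Digraph'} {n : ℕ} {g : ℕ → ℕ}

/-- balancedness of the vertex `g (k+1)` -/
def BalP (D : Digraph') (F : Fin 2 → ℕ → ℕ × ℕ) (g : ℕ → ℕ) (k : ℕ) : Prop :=
  F 0 (g (k+1)) = F 1 (g (k+1)) ∧
  F 0 (g (k+1)) = ((if (g k, g (k+1)) ∈ D.arcs then 1 else 0),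
                   (if (g (k+1), g k) ∈ D.arcs then 1 else 0)) ∧
  F 0 (g (k+1)) = ((if (g (k+2), g (k+1)) ∈ D.arcs then 1 else 0),
                   (if (g (k+1), g (k+2)) ∈ D.arcs then 1 else 0))

lemma tol_of_not_bal (E : CycEnum D n g) (F : Fin 2 → ℕ → ℕ × ℕ)
    (htight : ∀ v ∈ D.verts,
      (F 0 v).1 + (F 1 v).1 = D.inDeg v ∧ (F 0 v).2 + (F 1 v).2 = D.outDeg v)
    (k : ℕ) (hnb : ¬ BalP D F g k) :
    ∃ i₀ : Fin 2,
      ((if (g k, g (k+1)) ∈ D.arcs then 1 else 0) < (F i₀ (g (k+1))).1 ∨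
       (if (g (k+1), g k) ∈ D.arcs then 1 else 0) < (F i₀ (g (k+1))).2) ∨
      ((if (g (k+2), g (k+1)) ∈ D.arcs then 1 else 0) < (F i₀ (g (k+1))).1 ∨
       (if (g (k+1), g (k+2)) ∈ D.arcs then 1 else 0) < (F i₀ (g (k+1))).2) := by
  by_contra hno
  push_neg at hno
  obtain ⟨h0L1, h0L2, h0R1, h0R2⟩ :
      (F 0 (g (k+1))).1 ≤ (if (g k, g (k+1)) ∈ D.arcs then 1 else 0) ∧
      (F 0 (g (k+1))).2 ≤ (if (g (k+1), g k) ∈ D.arcs then 1 else 0) ∧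
      (F 0 (g (k+1))).1 ≤ (if (g (k+2), g (k+1)) ∈ D.arcs then 1 else 0) ∧
      (F 0 (g (k+1))).2 ≤ (if (g (k+1), g (k+2)) ∈ D.arcs then 1 else 0) := by
    have h := hno 0
    exact ⟨h.1.1, h.1.2, h.2.1, h.2.2⟩
  obtain ⟨h1L1, h1L2, h1R1, h1R2⟩ :
      (F 1 (g (k+1))).1 ≤ (if (g k, g (k+1)) ∈ D.arcs then 1 else 0) ∧
      (F 1 (g (k+1))).2 ≤ (if (g (k+1), g k) ∈ D.arcs then 1 else 0) ∧
      (F 1 (g (k+1))).1 ≤ (if (g (k+2), g (k+1)) ∈ D.arcs then 1 else 0) ∧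
      (F 1 (g (k+1))).2 ≤ (if (g (k+1), g (k+2)) ∈ D.arcs then 1 else 0) := by
    have h := hno 1
    exact ⟨h.1.1, h.1.2, h.2.1, h.2.2⟩
  have ht := htight (g (k+1)) (E.mem _)
  rw [E.inDeg_eq k] at ht
  rw [E.outDeg_eq k] at ht
  apply hnb
  refine ⟨?_, ?_, ?_⟩
  · have e1 : (F 0 (g (k+1))).1 = (F 1 (g (k+1))).1 := by omega
    have e2 : (F 0 (g (k+1))).2 = (F 1 (g (k+1))).2 := by omega
    exact Prod.ext e1 e2
  · have e1 : (F 0 (g (k+1))).1 = (if (g k, g (k+1)) ∈ D.arcs then 1 else 0) := by omega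
    have e2 : (F 0 (g (k+1))).2 = (if (g (k+1), g k) ∈ D.arcs then 1 else 0) := by omega
    exact Prod.ext e1 e2
  · have e1 : (F 0 (g (k+1))).1 = (if (g (k+2), g (k+1)) ∈ D.arcs then 1 else 0) := by omega
    have e2 : (F 0 (g (k+1))).2 = (if (g (k+1), g (k+2)) ∈ D.arcs then 1 else 0) := by omega
    exact Prod.ext e1 e2

lemma mono_hard_case (E : CycEnum D n g) (hcyc : D.IsCycleUG) (F : Fin 2 → ℕ → ℕ × ℕ)
    (htight : ∀ v ∈ D.verts,
      (F 0 v).1 + (F 1 v).1 = D.inDeg v ∧ (F 0 v).2 + (F 1 v).2 = D.outDeg v)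
    (e₀ : Fin 2) (hallfull : ∀ v ∈ D.verts, F (flip2 e₀) v = (0, 0)) :
    IsHardPair 2 D F := by
  refine IsHardPair.mono e₀ (E.biconnected hcyc) ?_ ?_
  · intro v hv
    have h := full_comp (htight v hv).1 (htight v hv).2 (hallfull v hv)
    exact Prod.ext h.1 h.2
  · intro k hk v hv
    rw [eq_flip2_of_ne hk]
    exact hallfull v hv

lemma bicycle_hard_case (E : CycEnum D n g) (hcyc : D.IsCycleUG) (F : Fin 2 → ℕ → ℕ × ℕ)
    (hodd : n % 2 = 1)
    (hmix : ∀ v ∈ D.verts, F 0 v ≠ (0,0) ∧ F 1 v ≠ (0,0))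
    (hbal : ∀ k, BalP D F g k) :
    IsHardPair 2 D F := by
  have hn := E.n3
  -- the swap relation
  have hswap : ∀ k, F 0 (g (k+2)) = ((F 0 (g (k+1))).2, (F 0 (g (k+1))).1) := by
    intro k
    have h1 := (hbal (k+1)).2.1
    have h2 := (hbal k).2.2
    rw [show k+1+1 = k+2 from rfl] at h1
    rw [h1, h2]
  -- iterate
  have hiter : ∀ t k, F 0 (g (k+1+t)) =
      (if t % 2 = 0 then F 0 (g (k+1)) else ((F 0 (g (k+1))).2, (F 0 (g (k+1))).1)) := by
    intro t
    induction t with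
    | zero => intro k; simp
    | succ t ih =>
      intro k
      have h1 : F 0 (g (k+1+t+1)) = ((F 0 (g (k+1+t))).2, (F 0 (g (k+1+t))).1) := by
        have := hswap (k+t)
        rw [show k+t+2 = k+1+t+1 from by omega, show k+t+1 = k+1+t from by omega] at this
        exact this
      rw [show k+1+(t+1) = k+1+t+1 from by omega, h1, ih k]
      rcases Nat.mod_two_eq_zero_or_one t with h | h
      · rw [if_pos h, if_neg (by omega)]
      · rw [if_neg (by omega), if_pos (by omega)]
  -- equal components
  have hcomp : ∀ k, (F 0 (g (k+1))).1 = (F 0 (g (k+1))).2 := by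
    intro k
    have h := hiter n k
    rw [E.per (k+1), if_neg (by omega)] at h
    conv_lhs => rw [h]
  -- all values (1,1)
  have hone : ∀ k, F 0 (g (k+1)) = (1, 1) := by
    intro k
    have hc := hcomp k
    have hb := (hbal k).2.1
    have hm := (hmix (g (k+1)) (E.mem _)).1
    rcases Nat.eq_zero_or_pos (F 0 (g (k+1))).1 with h0 | h0
    · exfalso
      apply hm
      have h2 : (F 0 (g (k+1))).2 = 0 := by omega
      exact Prod.ext h0 h2
    · have hle : (F 0 (g (k+1))).1 ≤ 1 := by
        have := congrArg Prod.fst hb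
        simp only at this
        split_ifs at this <;> omega
      have hle2 : (F 0 (g (k+1))).2 ≤ 1 := by
        have := congrArg Prod.snd hb
        simp only at this
        split_ifs at this <;> omega
      exact Prod.ext (by omega) (by omega)
  -- all arcs present in both directions
  have harcs : ∀ k, (g k, g (k+1)) ∈ D.arcs ∧ (g (k+1), g k) ∈ D.arcs := by
    intro k
    have hb := (hbal k).2.1
    rw [hone k] at hb
    constructor
    · by_contra hcon
      have := congrArg Prod.fst hb
      simp only [if_neg hcon] at this
      omega
    · by_contra hcon
      have := congrArg Prod.snd hb
      simp only [if_neg hcon] at this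
      omega
  have hF : ∀ v ∈ D.verts, F 0 v = (1,1) ∧ F 1 v = (1,1) := by
    intro v hv
    obtain ⟨q, hq, rfl⟩ := E.surj v hv
    have h1 : g q = g (q + n - 1 + 1) := by
      rw [show q + n - 1 + 1 = q + n from by omega, E.per]
    rw [h1]
    refine ⟨hone _, ?_⟩
    rw [← (hbal (q + n - 1)).1]
    exact hone _
  have hbid : D.Bidirected := by
    intro a ha
    obtain ⟨q, hq, hgq⟩ := E.surj a.2 (D.mem_snd a ha)
    have hmem : a.1 ∈ D.inNbrs (g (q + n - 1 + 1)) := by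
      rw [show q + n - 1 + 1 = q + n from by omega, E.per, hgq]
      rw [mem_inNbrs]
      have : a = (a.1, a.2) := rfl
      rw [← this]
      exact ha
    have hsub := E.inNbrs_subset (q + n - 1)
    have := hsub hmem
    simp only [Finset.mem_insert, Finset.mem_singleton] at this
    have hgq' : g (q + n) = a.2 := by rw [E.per]; exact hgq
    rcases this with h | h
    · -- a.1 = g (q+n-1), a.2 = g (q+n)
      have := (harcs (q + n - 1)).2
      rw [show q + n - 1 + 1 = q + n from by omega, hgq', ← h] at this
      exact this
    · -- a.1 = g (q+n-1+2) = g (q+n+1)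
      have := (harcs (q + n)).1
      rw [show q + n - 1 + 2 = q + n + 1 from by omega] at h
      rw [hgq', ← h] at this
      exact this
  refine IsHardPair.bicycle 0 1 (by decide) ⟨hbid, hcyc, ?_⟩ ?_ ?_ ?_
  · rw [E.card_verts]
    exact Nat.odd_iff.mpr hodd
  · intro v hv; exact (hF v hv).1
  · intro v hv; exact (hF v hv).2
  · intro k h0 h1
    exfalso
    fin_cases k
    · exact h0 rfl
    · exact h1 rfl

end Digraph'




/-- **Lemma (cycles).** Let `(D,F=(f₁,f₂))` be a valid tight non-hard pair whose underlying
graph is a cycle. Then `D` is `F`-dicolourable. -/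
theorem cycleUG_dicolourable
    (D : Digraph') (F : Fin 2 → ℕ → ℕ × ℕ)
    (hvalid : D.ValidPair 2 F) (htight : D.Tight 2 F)
    (hnothard : ¬ IsHardPair 2 D F)
    (hcyc : D.IsCycleUG) :
    D.Dicolourable 2 F := by
  obtain ⟨n, g, E⟩ := cycle_structure D hcyc
  have htight' : ∀ v ∈ D.verts,
      (F 0 v).1 + (F 1 v).1 = D.inDeg v ∧ (F 0 v).2 + (F 1 v).2 = D.outDeg v := by
    intro v hv
    have h := htight v hv
    constructor
    · have h1 := h.1
      rwa [Fin.sum_univ_two] at h1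
    · have h2 := h.2
      rwa [Fin.sum_univ_two] at h2
  by_cases hallmixed : ∀ v ∈ D.verts, F 0 v ≠ (0,0) ∧ F 1 v ≠ (0,0)
  · by_cases hnev : n % 2 = 0
    · exact scheme_even E F hallmixed hnev
    · have hodd : n % 2 = 1 := by
        have := Nat.mod_two_eq_zero_or_one n
        tauto
      by_cases hbal : ∀ k, BalP D F g k
      · exact absurd (bicycle_hard_case E hcyc F hodd hallmixed hbal) hnothard
      · obtain ⟨k, hk⟩ := not_forall.mp hbal
        obtain ⟨i₀, htol⟩ := tol_of_not_bal E F htight' k hk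
        rcases htol with h | h
        · exact scheme_defect E F hallmixed hodd k (Or.inl ⟨i₀, h⟩)
        · refine scheme_defect E F hallmixed hodd (k+1) (Or.inr ⟨i₀, ?_⟩)
          exact h
  · push_neg at hallmixed
    obtain ⟨v₀, hv₀, hfull₀⟩ := hallmixed
    set e₀ : Fin 2 := if F 1 v₀ = (0,0) then 0 else 1 with he₀def
    have he₀ : F (flip2 e₀) v₀ = (0,0) := by
      by_cases h1 : F 1 v₀ = (0,0)
      · rw [he₀def]
        simp only [if_pos h1]
        simpa [flip2] using h1
      · have h0 : F 0 v₀ = (0,0) := by tauto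
        rw [he₀def]
        simp only [if_neg h1]
        simpa [flip2] using h0
    by_cases hallfull : ∀ v ∈ D.verts, F (flip2 e₀) v = (0, 0)
    · exact absurd (mono_hard_case E hcyc F htight' e₀ hallfull) hnothard
    · push_neg at hallfull
      obtain ⟨v₁, hv₁, hnf⟩ := hallfull
      obtain ⟨q0, hq0, hgq0⟩ := E.surj v₀ hv₀
      obtain ⟨q1, hq1, hgq1⟩ := E.surj v₁ hv₁
      obtain ⟨m, hm1, hm2⟩ := E.exists_transition (fun w => F (flip2 e₀) w = (0,0)) q0 q1
        (by rw [hgq0]; exact he₀) (by rw [hgq1]; exact hnf)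
      refine scheme1 E F htight' (m+1) e₀ hm2 ?_
      intro e' he' heq
      apply hm1
      rw [show m+1+n-1 = m+n from by omega, E.per] at he'
      rw [← heq]
      exact he'
end

section
/- Let (D,F = (f₁,f₂)) be a valid pair satisfying property (E), and let v₀,…,v_ℓ be a path of G = UG(D) of length ℓ ≥ 3 such that every internal vertex vᵢ (1 ≤ i ≤ ℓ−1) has degree 2 in G, and such that both G and G' = UG(D − {v₁,…,v_{ℓ−1}}) are biconnected and contain a cycle. Then there exists an F-dicolouring β of D[{v₁,…,v_{ℓ−1}}] such that the pair reduced from (D,F) by β is not a hard pair. -/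
open scoped Classical

open Digraph'

section Aux

theorem Digraph'.ext' {D₁ D₂ : Digraph'} (h1 : D₁.verts = D₂.verts)
    (h2 : D₁.arcs = D₂.arcs) : D₁ = D₂ := by
  cases D₁; cases D₂; simp_all

theorem mem_inNbrs_iff {D : Digraph'} {w v : ℕ} : w ∈ D.inNbrs v ↔ (w, v) ∈ D.arcs := by
  simp only [Digraph'.inNbrs, Finset.mem_image, Finset.mem_filter]
  constructor
  · rintro ⟨⟨a, b⟩, ⟨ha, hb⟩, rfl⟩
    simp only at hb
    subst hb; exact ha
  · intro h; exact ⟨(w, v), ⟨h, rfl⟩, rfl⟩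

theorem mem_outNbrs_iff {D : Digraph'} {w v : ℕ} : w ∈ D.outNbrs v ↔ (v, w) ∈ D.arcs := by
  simp only [Digraph'.outNbrs, Finset.mem_image, Finset.mem_filter]
  constructor
  · rintro ⟨⟨a, b⟩, ⟨ha, hb⟩, rfl⟩
    simp only at hb
    subst hb; exact ha
  · intro h; exact ⟨(v, w), ⟨h, rfl⟩, rfl⟩

theorem mem_ugNbrs_iff {D : Digraph'} {w v : ℕ} :
    w ∈ D.ugNbrs v ↔ (w, v) ∈ D.arcs ∨ (v, w) ∈ D.arcs := by
  simp [Digraph'.ugNbrs, mem_inNbrs_iff, mem_outNbrs_iff]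

theorem inDeg_pos {D : Digraph'} {w v : ℕ} (h : (w, v) ∈ D.arcs) : 0 < D.inDeg v :=
  Finset.card_pos.mpr ⟨(w, v), Finset.mem_filter.mpr ⟨h, rfl⟩⟩

theorem outDeg_pos {D : Digraph'} {w v : ℕ} (h : (v, w) ∈ D.arcs) : 0 < D.outDeg v :=
  Finset.card_pos.mpr ⟨(v, w), Finset.mem_filter.mpr ⟨h, rfl⟩⟩

theorem del_verts (D : Digraph') (X : Finset ℕ) : (D.del X).verts = D.verts \ X := by
  simp only [Digraph'.del, Digraph'.induce]
  exact Finset.inter_eq_right.mpr (Finset.sdiff_subset)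

theorem del_arcs_subset (D : Digraph') (X : Finset ℕ) : (D.del X).arcs ⊆ D.arcs := by
  simp only [Digraph'.del, Digraph'.induce]
  exact Finset.filter_subset _ _

/-- A vertex of a connected digraph with at least two vertices has an incident arc. -/
theorem connected_incident {D : Digraph'} (hc : D.Connected) (hcard : 2 ≤ D.verts.card)
    {u : ℕ} (hu : u ∈ D.verts) : 0 < D.inDeg u ∨ 0 < D.outDeg u := by
  obtain ⟨v, hv, hvu⟩ := Finset.exists_mem_ne
    (show 1 < D.verts.card by omega) u
  have hreach := hc.2 u hu v hv
  rcases hreach.cases_head with h | h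
  · exact absurd h.symm hvu
  · obtain ⟨z, hz, _⟩ := h
    rcases hz.2.2 with h1 | h1
    · exact Or.inr (outDeg_pos h1)
    · exact Or.inl (inDeg_pos h1)

/-- A UG-cycle has at least 3 vertices. -/
theorem cycle_three {C : Digraph'} (hC : C.IsCycleUG) : 3 ≤ C.verts.card := by
  obtain ⟨v, hv⟩ := hC.1.1
  have hsub : insert v (C.ugNbrs v) ⊆ C.verts := by
    intro w hw
    rcases Finset.mem_insert.mp hw with rfl | hw
    · exact hv
    · rcases mem_ugNbrs_iff.mp hw with h | h
      · exact C.mem_fst _ h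
      · exact C.mem_snd _ h
  have hnotmem : v ∉ C.ugNbrs v := by
    intro hmem
    rcases mem_ugNbrs_iff.mp hmem with h | h
    · exact C.no_loops _ h rfl
    · exact C.no_loops _ h rfl
  have := Finset.card_le_card hsub
  rw [Finset.card_insert_of_notMem hnotmem, hC.2 v hv] at this
  omega

/-- The structure extracted from a hard pair: the properties used downstream. -/
def BaseHard (s : ℕ) (D : Digraph') (F : Fin s → ℕ → ℕ × ℕ) : Prop :=
  (∃ i : Fin s, ∀ k : Fin s, k ≠ i → ∀ v ∈ D.verts, F k v = (0, 0)) ∨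
  (∃ i j : Fin s, i ≠ j ∧ ∀ v ∈ D.verts, F i v = (1, 1) ∧ F j v = (1, 1)) ∨
  (∀ k : Fin s, ∀ u ∈ D.verts, ∀ v ∈ D.verts, F k u = F k v)

theorem baseHard_transfer {s : ℕ} {D : Digraph'} {F F₁ : Fin s → ℕ → ℕ × ℕ}
    (h : BaseHard s D F₁) (hag : ∀ k : Fin s, ∀ v ∈ D.verts, F k v = F₁ k v) :
    BaseHard s D F := by
  rcases h with ⟨i, hi⟩ | ⟨i, j, hij, hb⟩ | hc
  · exact Or.inl ⟨i, fun k hk v hv => (hag k v hv).trans (hi k hk v hv)⟩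
  · exact Or.inr (Or.inl ⟨i, j, hij, fun v hv =>
      ⟨(hag i v hv).trans (hb v hv).1, (hag j v hv).trans (hb v hv).2⟩⟩)
  · exact Or.inr (Or.inr fun k u hu v hv =>
      ((hag k u hu).trans (hc k u hu v hv)).trans (hag k v hv).symm)

/-- A hard pair on a single vertex has all functions zero there. -/
theorem hard_singleton {s : ℕ} {D : Digraph'} {F : Fin s → ℕ → ℕ × ℕ}
    (h : IsHardPair s D F) : ∀ x : ℕ, D.verts = {x} → ∀ k : Fin s, F k x = (0, 0) := by
  induction h with
  | @mono D F i hbi hi hk =>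
    intro x hx k
    exfalso
    have := hbi.1
    rw [hx, Finset.card_singleton] at this
    omega
  | @bicycle D F i j hij hD hi hj hk =>
    intro x hx k
    exfalso
    have harcs : D.arcs = ∅ := by
      apply Finset.eq_empty_of_forall_notMem
      intro a ha
      have h1 := D.mem_fst a ha
      have h2 := D.mem_snd a ha
      rw [hx, Finset.mem_singleton] at h1 h2
      exact D.no_loops a ha (h1.trans h2.symm)
    have hx2 := hD.2.1.2 x (by rw [hx]; exact Finset.mem_singleton_self x)
    simp [Digraph'.ugNbrs, Digraph'.inNbrs, Digraph'.outNbrs, harcs] at hx2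
  | @complete D F hD hconst hsym hsum =>
    intro x hx k
    have hxm : x ∈ D.verts := by rw [hx]; exact Finset.mem_singleton_self x
    have hs := hsum x hxm
    rw [hx, Finset.card_singleton] at hs
    simp only [Nat.sub_self] at hs
    have h2 : (F k x).2 = 0 := by
      have := Finset.sum_eq_zero_iff.mp hs k (Finset.mem_univ k)
      exact this
    have h1 : (F k x).1 = 0 := (hsym k x hxm).trans h2
    exact Prod.ext h1 h2
  | @join D F D₁ D₂ F₁ F₂ y h₁ h₂ hy hV hA hF₁ hF₂ hFy ih₁ ih₂ =>
    intro x hx k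
    have hyy : y ∈ D₁.verts ∧ y ∈ D₂.verts := by
      have : y ∈ D₁.verts ∩ D₂.verts := by rw [hy]; exact Finset.mem_singleton_self y
      exact Finset.mem_inter.mp this
    have hyx : y = x := by
      have hyD : y ∈ D.verts := by rw [hV]; exact Finset.mem_union_left _ hyy.1
      rw [hx, Finset.mem_singleton] at hyD
      exact hyD
    have hy1 : D₁.verts = {x} := by
      apply Finset.Subset.antisymm
      · intro z hz
        rw [← hx, hV]; exact Finset.mem_union_left _ hz
      · intro z hz
        rw [Finset.mem_singleton] at hz
        rw [hz, ← hyx]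
        exact hyy.1
    have hy2 : D₂.verts = {x} := by
      apply Finset.Subset.antisymm
      · intro z hz
        rw [← hx, hV]; exact Finset.mem_union_right _ hz
      · intro z hz
        rw [Finset.mem_singleton] at hz
        rw [hz, ← hyx]
        exact hyy.2
    subst hyx
    have e1 := ih₁ y hy1 k
    have e2 := ih₂ y hy2 k
    rw [hFy k, e1, e2]
    simp

/-- A hard pair with no cut vertex is of one of the three base types. -/
theorem hard_biconn {s : ℕ} {D : Digraph'} {F : Fin s → ℕ → ℕ × ℕ}
    (h : IsHardPair s D F) :
    (∀ x ∈ D.verts, (D.del {x}).Connected) → BaseHard s D F := by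
  induction h with
  | @mono D F i hbi hi hk =>
    intro _; exact Or.inl ⟨i, fun k hk' v hv => hk k hk' v hv⟩
  | @bicycle D F i j hij hD hi hj hk =>
    intro _; exact Or.inr (Or.inl ⟨i, j, hij, fun v hv => ⟨hi v hv, hj v hv⟩⟩)
  | @complete D F hD hconst hsym hsum =>
    intro _; exact Or.inr (Or.inr hconst)
  | @join D F D₁ D₂ F₁ F₂ x h₁ h₂ hx hV hA hF₁ hF₂ hFx ih₁ ih₂ =>
    intro hcon
    have hxx : x ∈ D₁.verts ∧ x ∈ D₂.verts := by
      have : x ∈ D₁.verts ∩ D₂.verts := by rw [hx]; exact Finset.mem_singleton_self x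
      exact Finset.mem_inter.mp this
    have hxD : x ∈ D.verts := by rw [hV]; exact Finset.mem_union_left _ hxx.1
    by_cases h2triv : D₂.verts = {x}
    · -- D₂ is trivial, so D coincides with D₁
      have harcs2 : D₂.arcs = ∅ := by
        apply Finset.eq_empty_of_forall_notMem
        intro a ha
        have h1 := D₂.mem_fst a ha
        have h2 := D₂.mem_snd a ha
        rw [h2triv, Finset.mem_singleton] at h1 h2
        exact D₂.no_loops a ha (h1.trans h2.symm)
      have hDeq : D = D₁ := by
        apply Digraph'.ext'
        · rw [hV, h2triv]
          exact Finset.union_eq_left.mpr (Finset.singleton_subset_iff.mpr hxx.1)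
        · rw [hA, harcs2, Finset.union_empty]
      have hF2x : ∀ k : Fin s, F₂ k x = (0, 0) := hard_singleton h₂ x h2triv
      have hag : ∀ k : Fin s, ∀ v ∈ D.verts, F k v = F₁ k v := by
        intro k v hv
        by_cases hvx : v = x
        · subst hvx
          rw [hFx k, hF2x k]
          simp
        · exact hF₁ k v (by rw [← hDeq]; exact hv) hvx
      have := ih₁ (by rw [← hDeq]; exact hcon)
      rw [← hDeq] at this
      exact baseHard_transfer this hag
    · by_cases h1triv : D₁.verts = {x}
      · -- D₁ is trivial, so D coincides with D₂
        have harcs1 : D₁.arcs = ∅ := by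
          apply Finset.eq_empty_of_forall_notMem
          intro a ha
          have h1 := D₁.mem_fst a ha
          have h2 := D₁.mem_snd a ha
          rw [h1triv, Finset.mem_singleton] at h1 h2
          exact D₁.no_loops a ha (h1.trans h2.symm)
        have hDeq : D = D₂ := by
          apply Digraph'.ext'
          · rw [hV, h1triv]
            exact Finset.union_eq_right.mpr (Finset.singleton_subset_iff.mpr hxx.2)
          · rw [hA, harcs1, Finset.empty_union]
        have hF1x : ∀ k : Fin s, F₁ k x = (0, 0) := hard_singleton h₁ x h1triv
        have hag : ∀ k : Fin s, ∀ v ∈ D.verts, F k v = F₂ k v := by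
          intro k v hv
          by_cases hvx : v = x
          · subst hvx
            rw [hFx k, hF1x k]
            simp
          · exact hF₂ k v (by rw [← hDeq]; exact hv) hvx
        have := ih₂ (by rw [← hDeq]; exact hcon)
        rw [← hDeq] at this
        exact baseHard_transfer this hag
      · -- both nontrivial: x is a cut vertex, contradiction
        exfalso
        have hu : ∃ u ∈ D₁.verts, u ≠ x := by
          by_contra hcontra
          push_neg at hcontra
          apply h1triv
          apply Finset.Subset.antisymm
          · intro z hz; rw [Finset.mem_singleton]; exact hcontra z hz
          · exact Finset.singleton_subset_iff.mpr hxx.1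
        have hw : ∃ w ∈ D₂.verts, w ≠ x := by
          by_contra hcontra
          push_neg at hcontra
          apply h2triv
          apply Finset.Subset.antisymm
          · intro z hz; rw [Finset.mem_singleton]; exact hcontra z hz
          · exact Finset.singleton_subset_iff.mpr hxx.2
        obtain ⟨u, hu1, hux⟩ := hu
        obtain ⟨w, hw2, hwx⟩ := hw
        have hdelverts : (D.del {x}).verts = D.verts \ {x} := del_verts D {x}
        have huD : u ∈ (D.del {x}).verts := by
          rw [hdelverts, Finset.mem_sdiff, Finset.mem_singleton]
          exact ⟨by rw [hV]; exact Finset.mem_union_left _ hu1, hux⟩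
        have hwD : w ∈ (D.del {x}).verts := by
          rw [hdelverts, Finset.mem_sdiff, Finset.mem_singleton]
          exact ⟨by rw [hV]; exact Finset.mem_union_right _ hw2, hwx⟩
        have hreach := (hcon x hxD).2 u huD w hwD
        have key : ∀ z, Relation.ReflTransGen (D.del {x}).ugAdj u z →
            z ∈ D₁.verts ∧ z ≠ x := by
          intro z hz
          induction hz with
          | refl => exact ⟨hu1, hux⟩
          | @tail b c hb hbc ih =>
            have hcx : c ≠ x := by
              have := hbc.2.1
              rw [hdelverts, Finset.mem_sdiff, Finset.mem_singleton] at this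
              exact this.2
            have harc : (b, c) ∈ D.arcs ∨ (c, b) ∈ D.arcs := by
              rcases hbc.2.2 with h' | h'
              · exact Or.inl (del_arcs_subset D {x} h')
              · exact Or.inr (del_arcs_subset D {x} h')
            refine ⟨?_, hcx⟩
            rcases harc with h' | h' <;> rw [hA, Finset.mem_union] at h'
            · rcases h' with h' | h'
              · exact D₁.mem_snd _ h'
              · exfalso
                have hb2 : b ∈ D₂.verts := D₂.mem_fst _ h'
                have : b ∈ D₁.verts ∩ D₂.verts := Finset.mem_inter.mpr ⟨ih.1, hb2⟩
                rw [hx, Finset.mem_singleton] at this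
                exact ih.2 this
            · rcases h' with h' | h'
              · exact D₁.mem_fst _ h'
              · exfalso
                have hb2 : b ∈ D₂.verts := D₂.mem_snd _ h'
                have : b ∈ D₁.verts ∩ D₂.verts := Finset.mem_inter.mpr ⟨ih.1, hb2⟩
                rw [hx, Finset.mem_singleton] at this
                exact ih.2 this
        have hw1 : w ∈ D₁.verts := (key w hreach).1
        have : w ∈ D₁.verts ∩ D₂.verts := Finset.mem_inter.mpr ⟨hw1, hw2⟩
        rw [hx, Finset.mem_singleton] at this
        exact hwx this

/-- The alternating colouring of the internal path vertices, with parameter colour `c`. -/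
noncomputable def earColour (m : ℕ) (p : Fin m → ℕ) (c : Fin 2) (n : ℕ) : Fin 2 :=
  if h : ∃ i : Fin m, p i = n then
    (if Even ((Classical.choose h : Fin m) : ℕ) then c + 1 else c) else 0

theorem earColour_apply {m : ℕ} {p : Fin m → ℕ} (hinj : Function.Injective p)
    (c : Fin 2) (i : Fin m) :
    earColour m p c (p i) = if Even (i : ℕ) then c + 1 else c := by
  have h : ∃ j : Fin m, p j = p i := ⟨i, rfl⟩
  rw [earColour, dif_pos h, hinj (Classical.choose_spec h)]

theorem fin2_if_ne (c i : Fin 2) {ma mb : ℕ} (hpar : Even ma ↔ ¬ Even mb)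
    (h1 : (if Even ma then c + 1 else c) = i)
    (h2 : (if Even mb then c + 1 else c) = i) : False := by
  have hcc : ∀ d : Fin 2, d + 1 ≠ d := by decide
  by_cases h : Even mb
  · rw [if_pos h] at h2
    rw [if_neg (fun he => (hpar.mp he) h)] at h1
    exact hcc c (h2.trans h1.symm)
  · rw [if_neg h] at h2
    rw [if_pos (hpar.mpr h)] at h1
    exact hcc c (h1.trans h2.symm)

end Aux

set_option maxHeartbeats 1000000 in
/-- **Lemma (colouring a long ear).** Let `(D,F=(f₁,f₂))` be a valid pair satisfying (E), and
let `v₀,…,v_ℓ` (`ℓ ≥ 3`) be a path of `UG(D)` whose internal vertices have degree 2 in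
`UG(D)`, such that both `UG(D)` and `UG(D − {v₁,…,v_{ℓ−1}})` are biconnected and contain a
cycle. Then there is an `F`-dicolouring `β` of `D[{v₁,…,v_{ℓ−1}}]` such that the pair reduced
from `(D,F)` by `β` is not a hard pair. -/

theorem colour_long_ear
    (D : Digraph') (F : Fin 2 → ℕ → ℕ × ℕ)
    (hvalid : D.ValidPair 2 F) (hE : D.PropE F)
    (ℓ : ℕ) (hℓ : 3 ≤ ℓ) (p : Fin (ℓ + 1) → ℕ)
    (hinj : Function.Injective p) (hmem : ∀ i, p i ∈ D.verts)
    (hpath : ∀ i : Fin ℓ, D.ugAdj (p i.castSucc) (p i.succ))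
    (hdeg2 : ∀ i : Fin (ℓ + 1), i ≠ 0 → i ≠ Fin.last ℓ → (D.ugNbrs (p i)).card = 2)
    (X : Finset ℕ)
    (hX : X = (Finset.univ.filter fun i : Fin (ℓ + 1) => i ≠ 0 ∧ i ≠ Fin.last ℓ).image p)
    (hbi : D.Biconnected) (hbi' : (D.del X).Biconnected)
    (hcyc : ∃ C : Digraph', C.IsSubdigraph D ∧ C.IsCycleUG)
    (hcyc' : ∃ C : Digraph', C.IsSubdigraph (D.del X) ∧ C.IsCycleUG) :
    ∃ β : ℕ → Fin 2, (D.induce X).IsDicolouring 2 F β ∧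
      ¬ IsHardPair 2 (D.del X) (D.reduceF F X β) := by
  classical
  -- a canonical, proof-free way to refer to the path vertices
  obtain ⟨Q, hQ⟩ : ∃ Q : ℕ → ℕ, ∀ i : Fin (ℓ + 1), Q (i : ℕ) = p i :=
    ⟨fun k => p ⟨min k ℓ, by omega⟩, fun i => by
      have hmk : (⟨min (i : ℕ) ℓ, by omega⟩ : Fin (ℓ + 1)) = i :=
        Fin.ext (Nat.min_eq_left (Nat.lt_succ_iff.mp i.isLt))
      show p ⟨min (i : ℕ) ℓ, by omega⟩ = p i
      rw [hmk]⟩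
  have hQm : ∀ (k : ℕ) (h : k < ℓ + 1), Q k = p ⟨k, h⟩ := fun k h => hQ ⟨k, h⟩
  have hQmem : ∀ k : ℕ, k < ℓ + 1 → Q k ∈ D.verts := by
    intro k h
    rw [hQm k h]
    exact hmem _
  have hQinj : ∀ k m : ℕ, k < ℓ + 1 → m < ℓ + 1 → Q k = Q m → k = m := by
    intro k m hk hm h
    rw [hQm k hk, hQm m hm] at h
    exact congrArg Fin.val (hinj h)
  -- membership in X
  have hXmemQ : ∀ n, n ∈ X ↔ ∃ k : ℕ, 1 ≤ k ∧ k ≤ ℓ - 1 ∧ Q k = n := by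
    intro n
    rw [hX]
    simp only [Finset.mem_image, Finset.mem_filter, Finset.mem_univ, true_and]
    constructor
    · rintro ⟨i, ⟨h0, hL⟩, rfl⟩
      refine ⟨(i : ℕ), ?_, ?_, hQ i⟩
      · rcases Nat.eq_zero_or_pos (i : ℕ) with h | h
        · exact absurd (Fin.ext (show (i : ℕ) = ((0 : Fin (ℓ + 1)) : ℕ) by simp [h])) h0
        · omega
      · have hne : (i : ℕ) ≠ ℓ := fun h =>
          hL (Fin.ext (show (i : ℕ) = ((Fin.last ℓ : Fin (ℓ + 1)) : ℕ) by
            simp [h, Fin.val_last]))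
        have := i.isLt
        omega
    · rintro ⟨k, h1, h2, rfl⟩
      refine ⟨⟨k, by omega⟩, ⟨?_, ?_⟩, (hQm k (by omega)).symm⟩
      · intro h
        have h' := congrArg Fin.val h
        simp only [Fin.val_zero] at h'
        omega
      · intro h
        have h' := congrArg Fin.val h
        simp only [Fin.val_last] at h'
        omega
  -- adjacency along the path
  have hadjQ : ∀ k : ℕ, k < ℓ →
      (Q k, Q (k + 1)) ∈ D.arcs ∨ (Q (k + 1), Q k) ∈ D.arcs := by
    intro k hk
    rw [hQm k (by omega), hQm (k + 1) (by omega)]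
    exact (hpath ⟨k, hk⟩).2.2
  -- neighbourhoods of internal vertices
  have hnbrQ : ∀ (k : ℕ) (hk : k + 2 ≤ ℓ),
      D.ugNbrs (Q (k + 1)) = {Q k, Q (k + 2)} := by
    intro k hk
    have hm1 : Q k ∈ D.ugNbrs (Q (k + 1)) := mem_ugNbrs_iff.mpr (hadjQ k (by omega))
    have hm2 : Q (k + 2) ∈ D.ugNbrs (Q (k + 1)) :=
      mem_ugNbrs_iff.mpr (hadjQ (k + 1) (by omega)).symm
    have hne : Q k ≠ Q (k + 2) := by
      intro h
      have := hQinj k (k + 2) (by omega) (by omega) h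
      omega
    have hsub : ({Q k, Q (k + 2)} : Finset ℕ) ⊆ D.ugNbrs (Q (k + 1)) := by
      intro w hw
      rcases Finset.mem_insert.mp hw with rfl | hw
      · exact hm1
      · rw [Finset.mem_singleton] at hw
        rw [hw]
        exact hm2
    have hcard2 : (D.ugNbrs (Q (k + 1))).card = 2 := by
      rw [hQm (k + 1) (by omega)]
      refine hdeg2 ⟨k + 1, by omega⟩ (fun h => ?_) (fun h => ?_)
      · have h' := congrArg Fin.val h
        simp only [Fin.val_zero] at h'
        omega
      · have h' := congrArg Fin.val h
        simp only [Fin.val_last] at h'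
        omega
    symm
    apply Finset.eq_of_subset_of_card_le hsub
    rw [hcard2, Finset.card_insert_of_notMem (by simpa using hne), Finset.card_singleton]
  -- every internal vertex has an incident arc
  have hQE : ∀ k : ℕ, 1 ≤ k → k ≤ ℓ - 1 →
      0 < D.inDeg (Q k) ∨ 0 < D.outDeg (Q k) := by
    intro k h1 h2
    rcases hadjQ k (by omega) with h | h
    · exact Or.inr (outDeg_pos h)
    · exact Or.inl (inDeg_pos h)
  -- value of the colourings on the path
  have hβQ : ∀ (c : Fin 2) (k : ℕ), k < ℓ + 1 →
      earColour (ℓ + 1) p c (Q k) = if Even k then c + 1 else c := by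
    intro c k h
    rw [hQm k h, earColour_apply hinj]
  -- the dicolourings
  have hdicol : ∀ c : Fin 2, (D.induce X).IsDicolouring 2 F (earColour (ℓ + 1) p c) := by
    intro c i H hH hne
    obtain ⟨v, hv⟩ := hne
    refine ⟨v, hv, ?_⟩
    have hvG := hH.1 hv
    simp only [Digraph'.induce, Finset.mem_inter, Finset.mem_filter] at hvG
    obtain ⟨⟨hvD, hvX⟩, -, hvcol⟩ := hvG
    have harcs : H.arcs = ∅ := by
      apply Finset.eq_empty_of_forall_notMem
      intro a ha
      have haG := hH.2 ha
      simp only [Digraph'.induce, Finset.mem_filter, Finset.mem_inter] at haG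
      obtain ⟨⟨haD, hax1, hax2⟩, ⟨-, hcol1⟩, ⟨-, hcol2⟩⟩ := haG
      obtain ⟨k, hk1, hk2, he⟩ := (hXmemQ a.1).mp hax1
      obtain ⟨k', rfl⟩ : ∃ k', k = k' + 1 := ⟨k - 1, by omega⟩
      have ha2 : a.2 ∈ D.ugNbrs (Q (k' + 1)) := by
        rw [he]
        exact mem_ugNbrs_iff.mpr (Or.inr (by simpa using haD))
      rw [hnbrQ k' (by omega)] at ha2
      rw [← he, hβQ c (k' + 1) (by omega)] at hcol1
      rcases Finset.mem_insert.mp ha2 with h2 | h2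
      · rw [h2, hβQ c k' (by omega)] at hcol2
        exact fin2_if_ne c i Nat.even_add_one hcol1 hcol2
      · rw [Finset.mem_singleton] at h2
        rw [h2, hβQ c (k' + 2) (by omega)] at hcol2
        exact fin2_if_ne c i
          (by simp [show k' + 2 = k' + 1 + 1 from rfl, Nat.even_add_one]) hcol1 hcol2
    have hdin : H.inDeg v = 0 := by simp [Digraph'.inDeg, harcs]
    have hdout : H.outDeg v = 0 := by simp [Digraph'.outDeg, harcs]
    rw [hdin, hdout]
    obtain ⟨k, hk1, hk2, he⟩ := (hXmemQ v).mp hvX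
    have hvarc := hQE k hk1 hk2
    rw [he] at hvarc
    rcases hvarc with h | h
    · exact Or.inl ((hE v hvD i).1 h)
    · exact Or.inr ((hE v hvD i).2 h)
  -- the only X-neighbour of Q 0 is Q 1
  have hv0X : ∀ n ∈ X, Q 0 ∈ D.ugNbrs n → n = Q 1 := by
    intro n hn hmem'
    obtain ⟨k, hk1, hk2, rfl⟩ := (hXmemQ n).mp hn
    obtain ⟨k', rfl⟩ : ∃ k', k = k' + 1 := ⟨k - 1, by omega⟩
    rw [hnbrQ k' (by omega)] at hmem'
    rcases Finset.mem_insert.mp hmem' with h | h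
    · have h0 := hQinj 0 k' (by omega) (by omega) h
      rw [← h0]
    · rw [Finset.mem_singleton] at h
      have h0 := hQinj 0 (k' + 2) (by omega) (by omega) h
      exact absurd h0 (by omega)
  -- basic facts about Q 0
  have hv0D : Q 0 ∈ D.verts := hQmem 0 (by omega)
  have hv0notX : Q 0 ∉ X := by
    intro h
    obtain ⟨k, h1, h2, he⟩ := (hXmemQ _).mp h
    have := hQinj k 0 (by omega) (by omega) he
    omega
  have hv0D' : Q 0 ∈ (D.del X).verts := by
    rw [del_verts]
    exact Finset.mem_sdiff.mpr ⟨hv0D, hv0notX⟩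
  -- a third vertex u of D − X
  obtain ⟨C, hCsub, hCcyc⟩ := hcyc'
  have hD'3 : 3 ≤ (D.del X).verts.card :=
    le_trans (cycle_three hCcyc) (Finset.card_le_card hCsub.1)
  have hu : ∃ u ∈ (D.del X).verts, u ≠ Q 0 ∧ u ≠ Q ℓ := by
    by_contra hcon
    push_neg at hcon
    have hsub : (D.del X).verts ⊆ {Q 0, Q ℓ} := by
      intro z hz
      simp only [Finset.mem_insert, Finset.mem_singleton]
      by_cases h : z = Q 0
      · exact Or.inl h
      · exact Or.inr (hcon z hz h)
    have h1 := Finset.card_le_card hsub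
    have h2 : ({Q 0, Q ℓ} : Finset ℕ).card ≤ 2 :=
      le_trans (Finset.card_insert_le _ _) (by simp)
    omega
  obtain ⟨u, huD', hu0, huL⟩ := hu
  have huDX : u ∈ D.verts ∧ u ∉ X := by
    rw [del_verts] at huD'
    exact Finset.mem_sdiff.mp huD'
  obtain ⟨huD, huX⟩ := huDX
  -- u has no neighbour in X
  have huXnbr : ∀ n ∈ X, u ∉ D.ugNbrs n := by
    intro n hn hmem'
    obtain ⟨k, hk1, hk2, rfl⟩ := (hXmemQ n).mp hn
    obtain ⟨k', rfl⟩ : ∃ k', k = k' + 1 := ⟨k - 1, by omega⟩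
    rw [hnbrQ k' (by omega)] at hmem'
    rcases Finset.mem_insert.mp hmem' with h | h
    · rcases Nat.eq_zero_or_pos k' with rfl | h0
      · exact hu0 h
      · exact huX (by rw [h]; exact (hXmemQ _).mpr ⟨k', h0, by omega, rfl⟩)
    · rw [Finset.mem_singleton] at h
      rcases eq_or_lt_of_le (show k' + 2 ≤ ℓ by omega) with hL | hL
      · rw [hL] at h
        exact huL h
      · exact huX (by rw [h]; exact (hXmemQ _).mpr ⟨k' + 2, by omega, by omega, rfl⟩)
  -- reduced functions at u are unchanged
  have hredu : ∀ (γ : ℕ → Fin 2) (k : Fin 2), D.reduceF F X γ k u = F k u := by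
    intro γ k
    have hin : D.inNbrs u ∩ X = ∅ := by
      apply Finset.eq_empty_of_forall_notMem
      intro w hw
      rw [Finset.mem_inter] at hw
      exact huXnbr w hw.2 (mem_ugNbrs_iff.mpr (Or.inr (mem_inNbrs_iff.mp hw.1)))
    have hout : D.outNbrs u ∩ X = ∅ := by
      apply Finset.eq_empty_of_forall_notMem
      intro w hw
      rw [Finset.mem_inter] at hw
      exact huXnbr w hw.2 (mem_ugNbrs_iff.mpr (Or.inl (mem_outNbrs_iff.mp hw.1)))
    simp [Digraph'.reduceF, hin, hout]
  -- arc indicators between Q 0 and Q 1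
  obtain ⟨aneg, haneg⟩ : ∃ a : ℕ, a = if (Q 1, Q 0) ∈ D.arcs then 1 else 0 := ⟨_, rfl⟩
  obtain ⟨apos, hapos⟩ : ∃ a : ℕ, a = if (Q 0, Q 1) ∈ D.arcs then 1 else 0 := ⟨_, rfl⟩
  have hP1X : Q 1 ∈ X := (hXmemQ _).mpr ⟨1, le_rfl, by omega, rfl⟩
  have hcardin : ∀ (γ : ℕ → Fin 2) (k : Fin 2),
      ((D.inNbrs (Q 0) ∩ X).filter fun w => γ w = k).card =
        if γ (Q 1) = k then aneg else 0 := by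
    intro γ k
    by_cases harc : (Q 1, Q 0) ∈ D.arcs
    · have hseteq : D.inNbrs (Q 0) ∩ X = {Q 1} := by
        apply Finset.Subset.antisymm
        · intro w hw
          rw [Finset.mem_inter] at hw
          rw [Finset.mem_singleton]
          exact hv0X w hw.2 (mem_ugNbrs_iff.mpr (Or.inr (mem_inNbrs_iff.mp hw.1)))
        · rw [Finset.singleton_subset_iff, Finset.mem_inter]
          exact ⟨mem_inNbrs_iff.mpr harc, hP1X⟩
      rw [hseteq, haneg, if_pos harc, Finset.filter_singleton]
      rcases eq_or_ne (γ (Q 1)) k with hγ | hγ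
      · rw [if_pos hγ, if_pos hγ, Finset.card_singleton]
      · rw [if_neg hγ, if_neg hγ, Finset.card_empty]
    · have hseteq : D.inNbrs (Q 0) ∩ X = ∅ := by
        apply Finset.eq_empty_of_forall_notMem
        intro w hw
        rw [Finset.mem_inter] at hw
        have hw1 := hv0X w hw.2 (mem_ugNbrs_iff.mpr (Or.inr (mem_inNbrs_iff.mp hw.1)))
        rw [hw1] at hw
        exact harc (mem_inNbrs_iff.mp hw.1)
      rw [hseteq, haneg, if_neg harc]
      simp
  have hcardout : ∀ (γ : ℕ → Fin 2) (k : Fin 2),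
      ((D.outNbrs (Q 0) ∩ X).filter fun w => γ w = k).card =
        if γ (Q 1) = k then apos else 0 := by
    intro γ k
    by_cases harc : (Q 0, Q 1) ∈ D.arcs
    · have hseteq : D.outNbrs (Q 0) ∩ X = {Q 1} := by
        apply Finset.Subset.antisymm
        · intro w hw
          rw [Finset.mem_inter] at hw
          rw [Finset.mem_singleton]
          exact hv0X w hw.2 (mem_ugNbrs_iff.mpr (Or.inl (mem_outNbrs_iff.mp hw.1)))
        · rw [Finset.singleton_subset_iff, Finset.mem_inter]
          exact ⟨mem_outNbrs_iff.mpr harc, hP1X⟩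
      rw [hseteq, hapos, if_pos harc, Finset.filter_singleton]
      rcases eq_or_ne (γ (Q 1)) k with hγ | hγ
      · rw [if_pos hγ, if_pos hγ, Finset.card_singleton]
      · rw [if_neg hγ, if_neg hγ, Finset.card_empty]
    · have hseteq : D.outNbrs (Q 0) ∩ X = ∅ := by
        apply Finset.eq_empty_of_forall_notMem
        intro w hw
        rw [Finset.mem_inter] at hw
        have hw1 := hv0X w hw.2 (mem_ugNbrs_iff.mpr (Or.inl (mem_outNbrs_iff.mp hw.1)))
        rw [hw1] at hw
        exact harc (mem_outNbrs_iff.mp hw.1)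
      rw [hseteq, hapos, if_neg harc]
      simp
  have hredv0 : ∀ (γ : ℕ → Fin 2) (k : Fin 2),
      D.reduceF F X γ k (Q 0) =
        ((F k (Q 0)).1 - (if γ (Q 1) = k then aneg else 0),
         (F k (Q 0)).2 - (if γ (Q 1) = k then apos else 0)) := by
    intro γ k
    simp only [Digraph'.reduceF]
    rw [hcardin γ k, hcardout γ k]
  -- existence of an arc between Q 0 and Q 1
  have haoa : (Q 0, Q 1) ∈ D.arcs ∨ (Q 1, Q 0) ∈ D.arcs := hadjQ 0 (by omega)
  have hfin : ¬ (aneg = 0 ∧ apos = 0) := by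
    rintro ⟨h1, h2⟩
    rw [haneg] at h1
    rw [hapos] at h2
    rcases haoa with h | h
    · rw [if_pos h] at h2
      exact one_ne_zero h2
    · rw [if_pos h] at h1
      exact one_ne_zero h1
  have huE : ∀ k : Fin 2, 1 ≤ (F k u).1 ∨ 1 ≤ (F k u).2 := by
    intro k
    rcases connected_incident hvalid.1 hbi.1 huD with h | h
    · exact Or.inl ((hE u huD k).1 h)
    · exact Or.inr ((hE u huD k).2 h)
  -- killing the monochromatic case
  have killmono : ∀ γ : ℕ → Fin 2,
      (∃ i : Fin 2, ∀ k : Fin 2, k ≠ i → ∀ v ∈ (D.del X).verts,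
        D.reduceF F X γ k v = (0, 0)) → False := by
    rintro γ ⟨i, hi⟩
    have hfs : ∀ d : Fin 2, d + 1 ≠ d := by decide
    have h0 := hi (i + 1) (hfs i) u huD'
    rw [hredu γ (i + 1)] at h0
    rcases huE (i + 1) with h | h
    · rw [h0] at h
      simp at h
    · rw [h0] at h
      simp at h
  have fin2cases : ∀ i j k : Fin 2, i ≠ j → k = i ∨ k = j := by decide
  -- colour of Q 1 under the two colourings
  have hc0 : earColour (ℓ + 1) p 0 (Q 1) = 0 := by
    rw [hβQ 0 1 (by omega)]
    decide
  have hc1 : earColour (ℓ + 1) p 1 (Q 1) = 1 := by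
    rw [hβQ 1 1 (by omega)]
    decide
  -- the main claim
  have hmain : ¬ IsHardPair 2 (D.del X) (D.reduceF F X (earColour (ℓ + 1) p 0)) ∨
      ¬ IsHardPair 2 (D.del X) (D.reduceF F X (earColour (ℓ + 1) p 1)) := by
    by_contra hcon
    push_neg at hcon
    obtain ⟨hhA, hhB⟩ := hcon
    have hFA0 : D.reduceF F X (earColour (ℓ + 1) p 0) 0 (Q 0) =
        ((F 0 (Q 0)).1 - aneg, (F 0 (Q 0)).2 - apos) := by
      rw [hredv0, hc0]
      simp
    have hFA1 : D.reduceF F X (earColour (ℓ + 1) p 0) 1 (Q 0) = F 1 (Q 0) := by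
      rw [hredv0, hc0]
      simp
    have hFB1 : D.reduceF F X (earColour (ℓ + 1) p 1) 1 (Q 0) =
        ((F 1 (Q 0)).1 - aneg, (F 1 (Q 0)).2 - apos) := by
      rw [hredv0, hc1]
      simp
    have hFB0 : D.reduceF F X (earColour (ℓ + 1) p 1) 0 (Q 0) = F 0 (Q 0) := by
      rw [hredv0, hc1]
      simp
    have BA := hard_biconn hhA hbi'.2.2
    have BB := hard_biconn hhB hbi'.2.2
    rcases BA with hmA | ⟨iA, jA, hijA, hbA⟩ | hcA
    · exact killmono _ hmA
    · -- A is a bicycle pair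
      have hAall : ∀ k : Fin 2, ∀ w ∈ (D.del X).verts,
          D.reduceF F X (earColour (ℓ + 1) p 0) k w = (1, 1) := by
        intro k w hw
        rcases fin2cases iA jA k hijA with rfl | rfl
        · exact (hbA w hw).1
        · exact (hbA w hw).2
      have hFu : ∀ k : Fin 2, F k u = (1, 1) :=
        fun k => (hredu _ k).symm.trans (hAall k u huD')
      have hF1v0 : F 1 (Q 0) = (1, 1) := hFA1.symm.trans (hAall 1 _ hv0D')
      rcases BB with hmB | ⟨iB, jB, hijB, hbB⟩ | hcB
      · exact killmono _ hmB
      · -- B is also a bicycle pair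
        have hBall : D.reduceF F X (earColour (ℓ + 1) p 1) 1 (Q 0) = (1, 1) := by
          rcases fin2cases iB jB 1 hijB with rfl | rfl
          · exact (hbB _ hv0D').1
          · exact (hbB _ hv0D').2
        rw [hFB1, hF1v0] at hBall
        simp only [Prod.mk.injEq] at hBall
        exact hfin ⟨by omega, by omega⟩
      · -- B is a complete pair
        have h := hcB 1 (Q 0) hv0D' u huD'
        rw [hFB1, hredu _ 1, hFu 1, hF1v0] at h
        simp only [Prod.mk.injEq] at h
        exact hfin ⟨by omega, by omega⟩
    · -- A is a complete pair
      rcases BB with hmB | ⟨iB, jB, hijB, hbB⟩ | hcB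
      · exact killmono _ hmB
      · -- B is a bicycle pair
        have hBall : ∀ k : Fin 2, ∀ w ∈ (D.del X).verts,
            D.reduceF F X (earColour (ℓ + 1) p 1) k w = (1, 1) := by
          intro k w hw
          rcases fin2cases iB jB k hijB with rfl | rfl
          · exact (hbB w hw).1
          · exact (hbB w hw).2
        have hFu : ∀ k : Fin 2, F k u = (1, 1) :=
          fun k => (hredu _ k).symm.trans (hBall k u huD')
        have hF0v0 : F 0 (Q 0) = (1, 1) := hFB0.symm.trans (hBall 0 _ hv0D')
        have h := hcA 0 (Q 0) hv0D' u huD'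
        rw [hFA0, hredu _ 0, hFu 0, hF0v0] at h
        simp only [Prod.mk.injEq] at h
        exact hfin ⟨by omega, by omega⟩
      · -- both complete
        have h1 := hcA 0 (Q 0) hv0D' u huD'
        have h2 := hcB 0 (Q 0) hv0D' u huD'
        rw [hFA0, hredu _ 0] at h1
        rw [hFB0, hredu _ 0] at h2
        rw [← h2] at h1
        have e1 := congrArg Prod.fst h1
        have e2 := congrArg Prod.snd h1
        simp only at e1 e2
        have hane : aneg = 0 := by
          by_cases harc : (Q 1, Q 0) ∈ D.arcs
          · exfalso
            have hge := (hE _ hv0D 0).1 (inDeg_pos harc)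
            rw [haneg, if_pos harc] at e1
            omega
          · rw [haneg, if_neg harc]
        have hapo : apos = 0 := by
          by_cases harc : (Q 0, Q 1) ∈ D.arcs
          · exfalso
            have hge := (hE _ hv0D 0).2 (outDeg_pos harc)
            rw [hapos, if_pos harc] at e2
            omega
          · rw [hapos, if_neg harc]
        exact hfin ⟨hane, hapo⟩
  rcases hmain with h | h
  · exact ⟨earColour (ℓ + 1) p 0, hdicol 0, h⟩
  · exact ⟨earColour (ℓ + 1) p 1, hdicol 1, h⟩
end
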